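/- arXiv:1806.01919 — 4 statements merged into one kernel-verified Lean document; each statement's English description precedes it below -/
import Mathlib

section
/- Random inversion sort, upper bound: There is a constant C > 0 such that the following holds for every n ≥ 2 and every initial array A of length n with entries from a linearly ordered set. Consider the random process that, in each iteration, chooses an unordered pair of two distinct positions of the array uniformly at random and swaps the entries at those positions if and only if they are out of order (the entry at the smaller position is strictly larger than the entry at the larger position). Let T be the first iteration after which the array contains no inversion. Then E[T] ≤ C · n² · ln n. -/
set_option autoImplicit false

open MeasureTheory ProbabilityTheory
open scoped ENNReal

set_option maxHeartbeats 2000000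

/-- The first-hitting time of the time-dependent predicate `P` (valued in `ℝ≥0∞`,
so that it is `∞` when `P` is never satisfied). -/
noncomputable def hitTime {Ω : Type*} (P : ℕ → Ω → Prop) (ω : Ω) : ENNReal :=
  sInf {t : ENNReal | ∃ n : ℕ, t = n ∧ P n ω}

section comb
variable {n : ℕ} {α : Type*} [LinearOrder α]

def invSet (a : Fin n → α) : Finset (Fin n × Fin n) :=
  Finset.univ.filter (fun p => p.1 < p.2 ∧ a p.2 < a p.1)

def invCount (a : Fin n → α) : ℕ := (invSet a).card

lemma mem_invSet {a : Fin n → α} {p : Fin n × Fin n} :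
    p ∈ invSet a ↔ p.1 < p.2 ∧ a p.2 < a p.1 := by simp [invSet]

lemma invCount_le_choose (a : Fin n → α) : invCount a ≤ n.choose 2 := by
  classical
  have h : invCount a ≤ (Finset.univ.powersetCard 2 : Finset (Finset (Fin n))).card := by
    apply Finset.card_le_card_of_injOn (fun p => {p.1, p.2})
    · intro p hp
      rw [Finset.mem_coe, mem_invSet] at hp
      simp only [Finset.mem_coe, Finset.mem_powersetCard]
      exact ⟨Finset.subset_univ _, Finset.card_pair hp.1.ne⟩
    · intro p hp q hq hpq
      rw [Finset.mem_coe, mem_invSet] at hp hq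
      simp only at hpq
      have h1 : p.1 ∈ ({q.1, q.2} : Finset (Fin n)) := by
        rw [← hpq]; simp
      have h2 : p.2 ∈ ({q.1, q.2} : Finset (Fin n)) := by
        rw [← hpq]; simp
      simp only [Finset.mem_insert, Finset.mem_singleton] at h1 h2
      rcases h1 with h1 | h1 <;> rcases h2 with h2 | h2
      · have := hp.1; rw [h1, h2] at this; exact absurd this (lt_irrefl _)
      · exact Prod.ext h1 h2
      · have := hp.1; rw [h1, h2] at this
        exact absurd (this.trans hq.1) (lt_irrefl _)
      · have := hp.1; rw [h1, h2] at this; exact absurd this (lt_irrefl _)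
  simpa [Finset.card_powersetCard] using h

lemma monotone_iff_invCount_eq_zero {a : Fin n → α} :
    Monotone a ↔ invCount a = 0 := by
  rw [invCount, Finset.card_eq_zero, Finset.eq_empty_iff_forall_notMem]
  constructor
  · intro hm p hp
    rw [mem_invSet] at hp
    exact absurd (hm hp.1.le) (not_le.mpr hp.2)
  · intro h
    rw [monotone_iff_forall_lt]
    intro x y hxy
    by_contra hc
    exact h (x, y) (mem_invSet.mpr ⟨hxy, not_le.mp hc⟩)

lemma invCount_swap_add_one_le {a : Fin n → α} {i j : Fin n} (hij : i < j) (h : a j < a i) :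
    invCount (a ∘ Equiv.swap i j) + 1 ≤ invCount a := by
  classical
  set σ := Equiv.swap i j with hσ
  set b := a ∘ σ with hb
  have hσi : σ i = j := Equiv.swap_apply_left i j
  have hσj : σ j = i := Equiv.swap_apply_right i j
  have hσo : ∀ k : Fin n, k ≠ i → k ≠ j → σ k = k := fun k h1 h2 =>
    Equiv.swap_apply_of_ne_of_ne h1 h2
  set φ : Fin n × Fin n → Fin n × Fin n :=
    fun p => if p.1 < i ∨ j < p.2 then (σ p.1, σ p.2) else p with hφ
  have hmem : (i, j) ∈ invSet a := mem_invSet.mpr ⟨hij, h⟩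
  have key : invCount b ≤ ((invSet a).erase (i, j)).card := by
    apply Finset.card_le_card_of_injOn φ
    · -- maps to
      intro p hp
      rw [Finset.mem_coe, mem_invSet] at hp
      obtain ⟨hkl, hinv⟩ := hp
      obtain ⟨k, l⟩ := p
      simp only at hkl hinv
      have hinv' : a (σ l) < a (σ k) := hinv
      rw [Finset.mem_coe, Finset.mem_erase]
      by_cases hc : k < i ∨ j < l
      · have hφp : φ (k, l) = (σ k, σ l) := by simp [hφ, hc]
        rw [hφp]
        rcases hc with hc | hc
        · -- k < i
          have hk : σ k = k := hσo k (ne_of_lt hc) (ne_of_lt (hc.trans hij))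
          have hkl' : σ k < σ l := by
            rw [hk]
            rcases eq_or_ne l i with rfl | hli
            · rw [hσi]; exact hc.trans hij
            · rcases eq_or_ne l j with rfl | hlj
              · rw [hσj]; exact hc
              · rw [hσo l hli hlj]; exact hkl
          refine ⟨?_, mem_invSet.mpr ⟨hkl', hinv'⟩⟩
          intro hcon
          have : σ k = i := (Prod.ext_iff.mp hcon).1
          rw [hk] at this
          exact absurd this (ne_of_lt hc)
        · -- j < l
          have hl : σ l = l := hσo l (fun e => absurd (e ▸ hc) (not_lt.mpr hij.le)) (ne_of_gt hc)
          have hkl' : σ k < σ l := by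
            rw [hl]
            rcases eq_or_ne k i with rfl | hki
            · rw [hσi]; exact hc
            · rcases eq_or_ne k j with rfl | hkj
              · rw [hσj]; exact hij.trans hc
              · rw [hσo k hki hkj]; exact hkl
          refine ⟨?_, mem_invSet.mpr ⟨hkl', hinv'⟩⟩
          intro hcon
          have : σ l = j := (Prod.ext_iff.mp hcon).2
          rw [hl] at this
          exact absurd this (ne_of_gt hc)
      · -- i ≤ k, l ≤ j
        push_neg at hc
        obtain ⟨hik, hlj⟩ := hc
        have hφp : φ (k, l) = (k, l) := by
          simp only [hφ]
          rw [if_neg]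
          push_neg
          exact ⟨hik, hlj⟩
        rw [hφp]
        have hne : (k, l) ≠ (i, j) := by
          intro hcon
          obtain ⟨rfl, rfl⟩ := Prod.ext_iff.mp hcon
          rw [hσi, hσj] at hinv'
          exact absurd hinv' (not_lt.mpr h.le)
        refine ⟨hne, mem_invSet.mpr ⟨hkl, ?_⟩⟩
        -- show a l < a k
        rcases eq_or_ne k i with rfl | hki
        · have hlj2 : l ≠ j := fun e => hne (by rw [e])
          rw [hσi, hσo l (ne_of_gt hkl) hlj2] at hinv'
          exact hinv'.trans h
        · rcases eq_or_ne l j with rfl | hlj'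
          · have hkj : k ≠ l := ne_of_lt hkl
            rw [hσj, hσo k hki (ne_of_lt hkl)] at hinv'
            exact h.trans hinv'
          · have hkj : k ≠ j := ne_of_lt (lt_of_lt_of_le hkl (lt_of_le_of_ne hlj hlj').le)
            have hli : l ≠ i := ne_of_gt (lt_of_le_of_lt hik hkl)
            rw [hσo k hki hkj, hσo l hli hlj'] at hinv'
            exact hinv'
    · -- injective
      have hinvol : ∀ p, φ (φ p) = p := by
        intro p
        by_cases hc : p.1 < i ∨ j < p.2
        · have h1 : φ p = (σ p.1, σ p.2) := by simp [hφ, hc]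
          have hc2 : (σ p.1, σ p.2).1 < i ∨ j < (σ p.1, σ p.2).2 := by
            rcases hc with hc | hc
            · left
              rw [hσo p.1 (ne_of_lt hc) (ne_of_lt (hc.trans hij))]
              exact hc
            · right
              rw [hσo p.2 (fun e => absurd (e ▸ hc) (not_lt.mpr hij.le)) (ne_of_gt hc)]
              exact hc
          rw [h1]
          simp only [hφ, if_pos hc2]
          exact Prod.ext (Equiv.swap_apply_self i j p.1) (Equiv.swap_apply_self i j p.2)
        · have h1 : φ p = p := by simp [hφ, hc]
          rw [h1, h1]
      intro p _ q _ hpq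
      have := congrArg φ hpq
      rwa [hinvol, hinvol] at this
  have herase : ((invSet a).erase (i, j)).card = invCount a - 1 :=
    Finset.card_erase_of_mem hmem
  have hpos : 1 ≤ invCount a := Finset.card_pos.mpr ⟨(i, j), hmem⟩
  rw [herase] at key
  omega

/-- One step of the sorting process. -/
def stepFun (a : Fin n → α) (p : Fin n × Fin n) : Fin n → α :=
  if a p.2 < a p.1 then a ∘ Equiv.swap p.1 p.2 else a

lemma invCount_stepFun_add_le (a : Fin n → α) (p : Fin n × Fin n) (hp : p.1 < p.2) :
    invCount (stepFun a p) + (if a p.2 < a p.1 then 1 else 0) ≤ invCount a := by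
  rw [stepFun]
  split_ifs with h
  · exact invCount_swap_add_one_le hp h
  · simp

/-- Iterating the step function along a sequence of chosen pairs. -/
def iterF (A0 : Fin n → α) : ℕ → (ℕ → Fin n × Fin n) → (Fin n → α)
  | 0, _ => A0
  | (t + 1), h => stepFun (iterF A0 t h) (h t)

lemma iterF_congr (A0 : Fin n → α) (t : ℕ) {h h' : ℕ → Fin n × Fin n}
    (he : ∀ s < t, h s = h' s) : iterF A0 t h = iterF A0 t h' := by
  induction t with
  | zero => rfl
  | succ t ih =>
      show stepFun _ _ = stepFun _ _
      rw [ih (fun s hs => he s (hs.trans (Nat.lt_succ_self t))), he t (Nat.lt_succ_self t)]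

end comb

lemma tsum_split_ennreal (g : ℕ → ℝ≥0∞) (k : ℕ) :
    ∑' t, g t = ∑ t ∈ Finset.range k, g t + ∑' t, g (t + k) := by
  induction k with
  | zero => simp
  | succ k ih =>
      rw [ih, Finset.sum_range_succ]
      have h : ∑' t, g (t + k) = g k + ∑' t, g (t + (k + 1)) := by
        calc ∑' t, g (t + k) = g (0 + k) + ∑' t, g (t + 1 + k) :=
              tsum_eq_zero_add' ENNReal.summable
          _ = g k + ∑' t, g (t + (k + 1)) := by
              rw [Nat.zero_add]
              congr 1
              exact tsum_congr (fun t => by rw [show t + 1 + k = t + (k + 1) by omega])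
      rw [h]; ring

/-- **Random inversion sort, upper bound.**
In each iteration an unordered pair of distinct positions (encoded as an ordered pair
`pair t` with increasing components, chosen uniformly and independently of everything else)
is chosen and the entries are swapped iff they form an inversion. `T` is the first
iteration after which the array has no inversion (i.e. is monotone).
Then `E[T] ≤ C n² ln n` for a universal constant `C > 0`. -/
theorem random_inversion_sort_upper_bound :
    ∃ C : ℝ, 0 < C ∧
      ∀ n : ℕ, 2 ≤ n →
      ∀ (α : Type) (_ : LinearOrder α) (A0 : Fin n → α),
      ∀ (Ω : Type) (_ : MeasurableSpace Ω) (μ : Measure Ω), IsProbabilityMeasure μ →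
      ∀ (pair : ℕ → Ω → Fin n × Fin n) (A : ℕ → Ω → Fin n → α),
      (∀ t, Measurable (pair t)) →
      (∀ t ω, (pair t ω).1 < (pair t ω).2) →
      iIndepFun pair μ →
      (∀ t : ℕ, ∀ i j : Fin n, i < j →
        μ {ω | pair t ω = (i, j)} = ((n.choose 2 : ENNReal))⁻¹) →
      (∀ ω, A 0 ω = A0) →
      (∀ t ω, A (t + 1) ω =
        if A t ω (pair t ω).2 < A t ω (pair t ω).1
          then (A t ω) ∘ (Equiv.swap (pair t ω).1 (pair t ω).2)
          else A t ω) →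
      ∫⁻ ω, hitTime (fun t ω => Monotone (A t ω)) ω ∂μ
        ≤ ENNReal.ofReal (C * n ^ 2 * Real.log n) := by
  refine ⟨10, by norm_num, ?_⟩
  intro n hn α _inst A0 Ω _mΩ μ hμ pair A hpm hplt hpind hpunif hA0 hAstep
  classical
  haveI : NeZero n := ⟨by omega⟩
  -- notation
  set M : ℕ := n.choose 2 with hMdef
  have hM1 : 1 ≤ M := Nat.choose_pos hn
  -- inversion count process
  set N : ℕ → Ω → ℕ := fun t ω => invCount (A t ω) with hNdef
  have hAstep' : ∀ t ω, A (t + 1) ω = stepFun (A t ω) (pair t ω) := by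
    intro t ω; rw [hAstep t ω]; rfl
  have hNdec : ∀ t ω, N (t + 1) ω +
      (if A t ω (pair t ω).2 < A t ω (pair t ω).1 then 1 else 0) ≤ N t ω := by
    intro t ω
    have := invCount_stepFun_add_le (A t ω) (pair t ω) (hplt t ω)
    rw [hNdef]; simpa [hAstep' t ω] using this
  -- the process as a function of the history
  have hAF : ∀ t ω, A t ω = iterF A0 t (fun s => pair s ω) := by
    intro t ω
    induction t with
    | zero => exact hA0 ω
    | succ t ih => rw [hAstep' t ω, ih]; rfl
  set hist : ∀ t : ℕ, Ω → (Fin t → Fin n × Fin n) :=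
    fun t ω s => pair s ω with hhistdef
  have hhistm : ∀ t, Measurable (hist t) :=
    fun t => measurable_pi_lambda _ (fun s => hpm s)
  set G : ∀ t : ℕ, (Fin t → Fin n × Fin n) → (Fin n → α) :=
    fun t v => iterF A0 t (fun s => if hs : s < t then v ⟨s, hs⟩ else (0, 0)) with hGdef
  have hAG : ∀ t ω, A t ω = G t (hist t ω) := by
    intro t ω
    rw [hAF t ω, hGdef]
    exact iterF_congr A0 t (fun s hs => by simp [hhistdef, hs])
  -- measurability of events about `A t`
  have hBmeas : ∀ t (i j : Fin n), MeasurableSet {ω | A t ω j < A t ω i} := by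
    intro t i j
    have he : {ω | A t ω j < A t ω i} = hist t ⁻¹' {v | G t v j < G t v i} := by
      ext ω; simp [hAG t ω]
    rw [he]
    exact hhistm t ((Set.toFinite _).measurableSet)
  have hNm : ∀ t, Measurable (fun ω => (N t ω : ℝ≥0∞)) := by
    intro t
    have he : (fun ω => (N t ω : ℝ≥0∞)) = (fun v => (invCount (G t v) : ℝ≥0∞)) ∘ hist t := by
      funext ω; simp [hNdef, hAG t ω]
    rw [he]
    exact (measurable_of_finite _).comp (hhistm t)
  -- `pair t` is independent of the history up to time `t`
  have hindep : ∀ t, IndepFun (pair t) (hist t) μ := by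
    intro t
    have hd : Disjoint ({t} : Finset ℕ) (Finset.range t) := by
      simp [Finset.disjoint_left]
    have h1 := hpind.indepFun_finset {t} (Finset.range t) hd hpm
    have h2 := h1.comp
      (φ := fun v : (↥({t} : Finset ℕ) → Fin n × Fin n) => v ⟨t, Finset.mem_singleton_self t⟩)
      (ψ := fun (v : ↥(Finset.range t) → Fin n × Fin n) (s : Fin t) =>
        v ⟨(s : ℕ), Finset.mem_range.mpr s.isLt⟩)
      (measurable_pi_apply _ : Measurable
        (fun v : (↥({t} : Finset ℕ) → Fin n × Fin n) => v ⟨t, Finset.mem_singleton_self t⟩))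
      (measurable_pi_lambda _ (fun s => measurable_pi_apply _) : Measurable
        (fun (v : ↥(Finset.range t) → Fin n × Fin n) (s : Fin t) =>
          v ⟨(s : ℕ), Finset.mem_range.mpr s.isLt⟩))
    exact h2
  -- probability of choosing a fixed inverted pair
  have hEB : ∀ t (p : Fin n × Fin n), p.1 < p.2 →
      μ ({ω | pair t ω = p} ∩ {ω | A t ω p.2 < A t ω p.1})
        = (M : ℝ≥0∞)⁻¹ * μ {ω | A t ω p.2 < A t ω p.1} := by
    intro t p hp
    have hB : {ω | A t ω p.2 < A t ω p.1} = hist t ⁻¹' {v | G t v p.2 < G t v p.1} := by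
      ext ω; simp [hAG t ω]
    have hE : {ω | pair t ω = p} = pair t ⁻¹' {p} := rfl
    rw [hE, hB, (hindep t).measure_inter_preimage_eq_mul _ _ (measurableSet_singleton p)
      ((Set.toFinite _).measurableSet)]
    congr 1
    · have := hpunif t p.1 p.2 hp
      exact this
  -- the probability of picking an inverted pair equals `M⁻¹ * E[N t]`
  set P2 : Finset (Fin n × Fin n) := Finset.univ.filter (fun p => p.1 < p.2) with hP2
  set X : ℕ → Ω → ℝ≥0∞ :=
    fun t ω => if A t ω (pair t ω).2 < A t ω (pair t ω).1 then 1 else 0 with hXdef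
  have hSt : ∀ t, {ω | A t ω (pair t ω).2 < A t ω (pair t ω).1}
      = ⋃ p ∈ P2, ({ω | pair t ω = p} ∩ {ω | A t ω p.2 < A t ω p.1}) := by
    intro t
    ext ω
    simp only [Set.mem_setOf_eq, Set.mem_iUnion, Set.mem_inter_iff]
    constructor
    · intro h
      exact ⟨pair t ω, by simp [hP2, hplt t ω], rfl, h⟩
    · rintro ⟨p, _, hpe, h⟩
      rw [hpe]; exact h
  have hXint : ∀ t, ∫⁻ ω, X t ω ∂μ = (M : ℝ≥0∞)⁻¹ * ∫⁻ ω, (N t ω : ℝ≥0∞) ∂μ := by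
    intro t
    have hmeasp : ∀ p ∈ P2,
        MeasurableSet ({ω | pair t ω = p} ∩ {ω | A t ω p.2 < A t ω p.1}) :=
      fun p _ => ((hpm t) (measurableSet_singleton p)).inter (hBmeas t p.1 p.2)
    have hdisj : (↑P2 : Set (Fin n × Fin n)).PairwiseDisjoint
        (fun p => {ω | pair t ω = p} ∩ {ω | A t ω p.2 < A t ω p.1}) := by
      intro p _ q _ hpq
      refine Set.disjoint_left.mpr ?_
      rintro ω ⟨h1, _⟩ ⟨h2, _⟩
      exact hpq (h1 ▸ h2 ▸ rfl)
    have hStmeas : MeasurableSet {ω | A t ω (pair t ω).2 < A t ω (pair t ω).1} := by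
      rw [hSt t]; exact P2.measurableSet_biUnion hmeasp
    have h1 : ∫⁻ ω, X t ω ∂μ = μ {ω | A t ω (pair t ω).2 < A t ω (pair t ω).1} := by
      rw [← lintegral_indicator_one hStmeas]
      congr 1; funext ω
      simp [hXdef, Set.indicator_apply]
    rw [h1, hSt t, measure_biUnion_finset hdisj hmeasp]
    have h2 : ∀ p ∈ P2, μ ({ω | pair t ω = p} ∩ {ω | A t ω p.2 < A t ω p.1})
        = (M : ℝ≥0∞)⁻¹ * μ {ω | A t ω p.2 < A t ω p.1} :=
      fun p hp => hEB t p (by simpa [hP2] using hp)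
    rw [Finset.sum_congr rfl h2, ← Finset.mul_sum]
    congr 1
    have h3 : ∀ p ∈ P2, μ {ω | A t ω p.2 < A t ω p.1}
        = ∫⁻ ω, Set.indicator {ω' | A t ω' p.2 < A t ω' p.1} (fun _ => (1 : ℝ≥0∞)) ω ∂μ :=
      fun p _ => (lintegral_indicator_one (hBmeas t p.1 p.2)).symm
    rw [Finset.sum_congr rfl h3,
      ← lintegral_finset_sum _ (fun p _ => (measurable_const.indicator (hBmeas t p.1 p.2)))]
    congr 1; funext ω
    have h4 : ∑ p ∈ P2,
        Set.indicator {ω' | A t ω' p.2 < A t ω' p.1} (fun _ => (1 : ℝ≥0∞)) ω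
        = ∑ p ∈ P2, (if A t ω p.2 < A t ω p.1 then (1 : ℝ≥0∞) else 0) := by
      refine Finset.sum_congr rfl (fun p _ => ?_)
      simp [Set.indicator_apply]
    rw [h4, Finset.sum_boole]
    have h5 : P2.filter (fun p => A t ω p.2 < A t ω p.1) = invSet (A t ω) := by
      rw [hP2, Finset.filter_filter, invSet]
    rw [h5]
    simp [hNdef, invCount]
  -- expected inversion count decays geometrically
  set e : ℕ → ℝ≥0∞ := fun t => ∫⁻ ω, (N t ω : ℝ≥0∞) ∂μ with hedef
  have heM : ∀ t, e t ≤ (M : ℝ≥0∞) := by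
    intro t
    calc e t ≤ ∫⁻ _, (M : ℝ≥0∞) ∂μ :=
          lintegral_mono (fun ω => Nat.cast_le.mpr (invCount_le_choose (A t ω)))
      _ = (M : ℝ≥0∞) := by simp
  have heTop : ∀ t, e t ≠ ⊤ :=
    fun t => ((heM t).trans_lt (ENNReal.natCast_lt_top M)).ne
  set r : ℝ≥0∞ := 1 - (M : ℝ≥0∞)⁻¹ with hrdef
  have hstep : ∀ t, e (t + 1) ≤ r * e t := by
    intro t
    have hpt : ∀ ω, (N (t + 1) ω : ℝ≥0∞) + X t ω ≤ (N t ω : ℝ≥0∞) := by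
      intro ω
      have h := hNdec t ω
      simp only [hXdef]
      split_ifs at h ⊢ with hc
      · exact_mod_cast h
      · simpa using (Nat.cast_le (α := ℝ≥0∞)).mpr h
    have hint : e (t + 1) + (M : ℝ≥0∞)⁻¹ * e t ≤ e t := by
      rw [← hXint t, hedef, ← lintegral_add_left (hNm (t + 1))]
      exact lintegral_mono hpt
    have h2 : e (t + 1) ≤ e t - (M : ℝ≥0∞)⁻¹ * e t :=
      ENNReal.le_sub_of_add_le_right
        (ENNReal.mul_ne_top (ENNReal.inv_ne_top.mpr (Nat.cast_ne_zero.mpr (by omega)))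
          (heTop t)) hint
    refine h2.trans_eq ?_
    rw [hrdef, ENNReal.sub_mul (fun _ _ => heTop t), one_mul]
  have hgeom : ∀ t, e t ≤ (M : ℝ≥0∞) * r ^ t := by
    intro t
    induction t with
    | zero => simpa using heM 0
    | succ t ih =>
        calc e (t + 1) ≤ r * e t := hstep t
          _ ≤ r * ((M : ℝ≥0∞) * r ^ t) := mul_le_mul_right ih r
          _ = (M : ℝ≥0∞) * r ^ (t + 1) := by ring
  -- tail bound for the hitting time
  have hμN : ∀ t, μ {ω | 1 ≤ (N t ω : ℝ≥0∞)} ≤ min 1 ((M : ℝ≥0∞) * r ^ t) := by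
    intro t
    refine le_min prob_le_one ?_
    have h1 : 1 * μ {ω | 1 ≤ (N t ω : ℝ≥0∞)} ≤ e t :=
      mul_meas_ge_le_lintegral₀ (hNm t).aemeasurable 1
    rw [one_mul] at h1
    exact h1.trans (hgeom t)
  have hsets : ∀ t, MeasurableSet {ω | 1 ≤ (N t ω : ℝ≥0∞)} :=
    fun t => measurableSet_le measurable_const (hNm t)
  have hhit : ∀ ω, hitTime (fun t ω => Monotone (A t ω)) ω
      ≤ ∑' t, Set.indicator {ω' | 1 ≤ (N t ω' : ℝ≥0∞)} (fun _ => (1 : ℝ≥0∞)) ω := by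
    intro ω
    by_cases hex : ∃ t, N t ω = 0
    · have h1 : hitTime (fun t ω => Monotone (A t ω)) ω ≤ (Nat.find hex : ℝ≥0∞) :=
        sInf_le ⟨Nat.find hex, rfl, monotone_iff_invCount_eq_zero.mpr (Nat.find_spec hex)⟩
      refine h1.trans ?_
      have hterm : ∀ t ∈ Finset.range (Nat.find hex),
          Set.indicator {ω' | 1 ≤ (N t ω' : ℝ≥0∞)} (fun _ => (1 : ℝ≥0∞)) ω = 1 := by
        intro t ht
        have h2 : N t ω ≠ 0 := Nat.find_min hex (Finset.mem_range.mp ht)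
        have h2' : (1 : ℝ≥0∞) ≤ (N t ω : ℝ≥0∞) := by
          exact_mod_cast Nat.one_le_iff_ne_zero.mpr h2
        simp [Set.indicator_apply, Set.mem_setOf_eq, h2', h2]
      have h3 : ∑ t ∈ Finset.range (Nat.find hex),
          Set.indicator {ω' | 1 ≤ (N t ω' : ℝ≥0∞)} (fun _ => (1 : ℝ≥0∞)) ω
          = (Nat.find hex : ℝ≥0∞) := by
        rw [Finset.sum_congr rfl hterm]; simp
      exact h3 ▸ ENNReal.sum_le_tsum _
    · push_neg at hex
      have hone : ∀ t, Set.indicator {ω' | 1 ≤ (N t ω' : ℝ≥0∞)}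
          (fun _ => (1 : ℝ≥0∞)) ω = 1 := by
        intro t
        have h2' : (1 : ℝ≥0∞) ≤ (N t ω : ℝ≥0∞) := by
          exact_mod_cast Nat.one_le_iff_ne_zero.mpr (hex t)
        simp [Set.indicator_apply, Set.mem_setOf_eq, h2', hex t]
      rw [tsum_congr hone, ENNReal.tsum_const_eq_top_of_ne_zero one_ne_zero]
      exact le_top
  -- put everything together
  have hmain : ∫⁻ ω, hitTime (fun t ω => Monotone (A t ω)) ω ∂μ
      ≤ ∑' t, min 1 ((M : ℝ≥0∞) * r ^ t) := by
    calc ∫⁻ ω, hitTime (fun t ω => Monotone (A t ω)) ω ∂μ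
        ≤ ∫⁻ ω, ∑' t, Set.indicator {ω' | 1 ≤ (N t ω' : ℝ≥0∞)}
            (fun _ => (1 : ℝ≥0∞)) ω ∂μ := lintegral_mono hhit
      _ = ∑' t, ∫⁻ ω, Set.indicator {ω' | 1 ≤ (N t ω' : ℝ≥0∞)}
            (fun _ => (1 : ℝ≥0∞)) ω ∂μ :=
          lintegral_tsum (fun t => (measurable_const.indicator (hsets t)).aemeasurable)
      _ = ∑' t, μ {ω | 1 ≤ (N t ω : ℝ≥0∞)} := by
          refine tsum_congr (fun t => ?_)
          exact lintegral_indicator_one (hsets t)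
      _ ≤ ∑' t, min 1 ((M : ℝ≥0∞) * r ^ t) := ENNReal.tsum_le_tsum hμN
  -- truncate the sum at time `t0`
  set t0 : ℕ := ⌈(M : ℝ) * Real.log M⌉₊ with ht0
  have hMinv_le_one : ((M : ℝ≥0∞))⁻¹ ≤ 1 :=
    ENNReal.inv_le_one.mpr (by exact_mod_cast hM1)
  have hsplit : ∑' t, min 1 ((M : ℝ≥0∞) * r ^ t)
      ≤ (t0 : ℝ≥0∞) + (M : ℝ≥0∞) * r ^ t0 * (M : ℝ≥0∞) := by
    rw [tsum_split_ennreal (fun t => min 1 ((M : ℝ≥0∞) * r ^ t)) t0]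
    refine add_le_add ?_ ?_
    · calc ∑ t ∈ Finset.range t0, min 1 ((M : ℝ≥0∞) * r ^ t)
          ≤ ∑ _t ∈ Finset.range t0, (1 : ℝ≥0∞) :=
            Finset.sum_le_sum (fun t _ => min_le_left _ _)
        _ = (t0 : ℝ≥0∞) := by simp
    · calc ∑' t : ℕ, min 1 ((M : ℝ≥0∞) * r ^ (t + t0))
          ≤ ∑' t : ℕ, (M : ℝ≥0∞) * r ^ t0 * r ^ t := by
            refine ENNReal.tsum_le_tsum (fun t => ?_)
            refine (min_le_right _ _).trans_eq ?_
            rw [pow_add]; ring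
        _ = (M : ℝ≥0∞) * r ^ t0 * (1 - r)⁻¹ := by
            rw [ENNReal.tsum_mul_left, ENNReal.tsum_geometric]
        _ = (M : ℝ≥0∞) * r ^ t0 * (M : ℝ≥0∞) := by
            congr 1
            rw [hrdef, ENNReal.sub_sub_cancel ENNReal.one_ne_top hMinv_le_one,
              inv_inv _]
  -- bound `r ^ t0` using real estimates
  have hMR : (1 : ℝ) ≤ (M : ℝ) := by exact_mod_cast hM1
  have hMR0 : (0 : ℝ) < (M : ℝ) := by linarith
  have hMinv1 : ((M : ℝ))⁻¹ ≤ 1 := by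
    rw [inv_eq_one_div, div_le_one hMR0]; linarith
  have h0r : (0 : ℝ) ≤ 1 - (M : ℝ)⁻¹ := by linarith
  have hrof : r = ENNReal.ofReal (1 - (M : ℝ)⁻¹) := by
    rw [hrdef, ENNReal.ofReal_sub _ (by positivity), ENNReal.ofReal_one]
    congr 1
    rw [ENNReal.ofReal_inv_of_pos hMR0, ENNReal.ofReal_natCast]
  have hrpow : r ^ t0 ≤ ENNReal.ofReal ((M : ℝ))⁻¹ := by
    rw [hrof, ← ENNReal.ofReal_pow h0r]
    apply ENNReal.ofReal_le_ofReal
    have h1 : (1 - (M : ℝ)⁻¹) ≤ Real.exp (-(M : ℝ)⁻¹) := by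
      have := Real.add_one_le_exp (-(M : ℝ)⁻¹); linarith
    calc (1 - (M : ℝ)⁻¹) ^ t0 ≤ (Real.exp (-(M : ℝ)⁻¹)) ^ t0 := pow_le_pow_left₀ h0r h1 t0
      _ = Real.exp (-((t0 : ℝ) * (M : ℝ)⁻¹)) := by
          rw [← Real.exp_nat_mul]; congr 1; ring
      _ ≤ Real.exp (-(Real.log (M : ℝ))) := by
          apply Real.exp_le_exp.mpr
          have hceil : (M : ℝ) * Real.log M ≤ (t0 : ℝ) := Nat.le_ceil _
          rw [neg_le_neg_iff]
          calc Real.log (M : ℝ) = ((M : ℝ) * Real.log M) * (M : ℝ)⁻¹ := by field_simp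
            _ ≤ (t0 : ℝ) * (M : ℝ)⁻¹ := by gcongr
      _ = ((M : ℝ))⁻¹ := by rw [Real.exp_neg, Real.exp_log hMR0]
  have hfinal2 : (M : ℝ≥0∞) * r ^ t0 * (M : ℝ≥0∞) ≤ (M : ℝ≥0∞) := by
    calc (M : ℝ≥0∞) * r ^ t0 * (M : ℝ≥0∞)
        ≤ (M : ℝ≥0∞) * ENNReal.ofReal ((M : ℝ))⁻¹ * (M : ℝ≥0∞) := by gcongr
      _ = ((M : ℝ≥0∞) * ENNReal.ofReal ((M : ℝ))⁻¹) * (M : ℝ≥0∞) := by ring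
      _ = 1 * (M : ℝ≥0∞) := by
          congr 1
          rw [← ENNReal.ofReal_natCast M, ← ENNReal.ofReal_mul (by positivity)]
          rw [mul_inv_cancel₀ (by linarith), ENNReal.ofReal_one]
      _ = (M : ℝ≥0∞) := one_mul _
  refine hmain.trans ((hsplit.trans (add_le_add_right hfinal2 _)).trans ?_)
  -- final real-number arithmetic
  have hsum : ((t0 : ℝ≥0∞)) + (M : ℝ≥0∞) = ENNReal.ofReal ((t0 : ℝ) + (M : ℝ)) := by
    rw [ENNReal.ofReal_add (by positivity) (by positivity), ENNReal.ofReal_natCast,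
      ENNReal.ofReal_natCast]
  rw [hsum]
  apply ENNReal.ofReal_le_ofReal
  have hL : Real.log 2 ≤ Real.log n := Real.log_le_log (by norm_num) (by exact_mod_cast hn)
  have hL2 : (0.5 : ℝ) < Real.log 2 := by
    have := Real.log_two_gt_d9; linarith
  have hlogn : (0.5 : ℝ) ≤ Real.log n := by linarith
  have hMn : (M : ℝ) ≤ (n : ℝ) ^ 2 := by
    have hnat : M ≤ n ^ 2 := by
      rw [hMdef, Nat.choose_two_right, pow_two]
      exact (Nat.div_le_self _ _).trans (Nat.mul_le_mul_left _ (Nat.sub_le _ _))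
    exact_mod_cast hnat
  have hn2 : (4 : ℝ) ≤ (n : ℝ) ^ 2 := by
    have h2n : (2 : ℝ) ≤ (n : ℝ) := by exact_mod_cast hn
    nlinarith
  have hlogM0 : 0 ≤ Real.log (M : ℝ) := Real.log_nonneg hMR
  have hlogM : Real.log (M : ℝ) ≤ 2 * Real.log n := by
    calc Real.log (M : ℝ) ≤ Real.log ((n : ℝ) ^ 2) := Real.log_le_log hMR0 hMn
      _ = 2 * Real.log n := by rw [Real.log_pow]; push_cast; ring
  have ht0le : (t0 : ℝ) ≤ (M : ℝ) * Real.log M + 1 :=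
    le_of_lt (Nat.ceil_lt_add_one (mul_nonneg (by linarith) hlogM0))
  have hprod : (M : ℝ) * Real.log (M : ℝ) ≤ (n : ℝ) ^ 2 * (2 * Real.log n) :=
    mul_le_mul hMn hlogM hlogM0 (by positivity)
  nlinarith [mul_le_mul_of_nonneg_left hlogn (by positivity : (0 : ℝ) ≤ (n : ℝ) ^ 2)]
end

section
/- Random inversion sort, lower bound: There is a constant c > 0 such that the following holds for every even n ≥ 2. Consider the initial array A of length n given by A = (2, 1, 4, 3, …, n, n−1), i.e., the sorted array with each consecutive pair of elements swapped. Run the random process that, in each iteration, chooses an unordered pair of two distinct positions of the array uniformly at random and swaps the entries at those positions if and only if they are out of order, and let T be the first iteration after which the array contains no inversion. Then E[T] ≥ c · n² · ln n. -/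
set_option autoImplicit false

open MeasureTheory ProbabilityTheory

open scoped Classical

/-- Model array value: blocks in `F` are already fixed (sorted); others still swapped. -/
noncomputable def rvsModel (n : ℕ) (F : ℕ → Prop) (i : Fin n) : ℕ :=
  if F ((i : ℕ) / 2) then (i : ℕ) + 1
  else if (i : ℕ) % 2 = 0 then (i : ℕ) + 2 else (i : ℕ)

lemma rvsModel_no_inv {n : ℕ} (F : ℕ → Prop) (i j : Fin n) (hij : (i : ℕ) < (j : ℕ))
    (h : ¬(((j : ℕ) = (i : ℕ) + 1) ∧ (i : ℕ) % 2 = 0 ∧ ¬ F ((i : ℕ) / 2))) :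
    rvsModel n F i ≤ rvsModel n F j := by
  unfold rvsModel
  by_cases hFi : F ((i : ℕ) / 2) <;> by_cases hFj : F ((j : ℕ) / 2) <;>
    simp only [hFi, hFj, if_true, if_false, if_pos, if_neg, not_false_iff]
  · omega
  · split_ifs <;> omega
  · have h' : ¬(((j:ℕ) = (i:ℕ)+1) ∧ (i:ℕ) % 2 = 0) := fun hh => h ⟨hh.1, hh.2, hFi⟩
    split_ifs <;> omega
  · have h' : ¬(((j:ℕ) = (i:ℕ)+1) ∧ (i:ℕ) % 2 = 0) := fun hh => h ⟨hh.1, hh.2, hFi⟩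
    split_ifs <;> omega

lemma rvsModel_swap {n : ℕ} (F : ℕ → Prop) (i j : Fin n)
    (hj : (j : ℕ) = (i : ℕ) + 1) (hi : (i : ℕ) % 2 = 0) (hF : ¬ F ((i : ℕ) / 2)) :
    (rvsModel n F) ∘ (Equiv.swap i j) = rvsModel n (fun k => F k ∨ k = (i : ℕ) / 2) := by
  have hij : i ≠ j := by intro h; rw [h] at hj; omega
  funext x
  simp only [Function.comp_apply]
  rcases eq_or_ne x i with rfl | hxi
  · rw [Equiv.swap_apply_left]
    have hj2 : (j : ℕ) / 2 = (x : ℕ) / 2 := by omega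
    have hjo : ¬ ((j : ℕ) % 2 = 0) := by omega
    unfold rvsModel
    rw [hj2, if_neg hF, if_neg hjo, if_pos (Or.inr rfl), hj]
  · rcases eq_or_ne x j with rfl | hxj
    · rw [Equiv.swap_apply_right]
      have hx2 : (i : ℕ) / 2 = (x : ℕ) / 2 := by omega
      unfold rvsModel
      rw [hx2] at hF ⊢
      rw [if_neg hF, if_pos hi, if_pos (Or.inr rfl)]
      omega
    · rw [Equiv.swap_apply_of_ne_of_ne hxi hxj]
      have hne : ¬ ((x : ℕ) / 2 = (i : ℕ) / 2) := by
        intro hh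
        have h1 : (x : ℕ) ≠ (i : ℕ) := fun h => hxi (Fin.ext h)
        have h2 : (x : ℕ) ≠ (j : ℕ) := fun h => hxj (Fin.ext h)
        omega
      unfold rvsModel
      split_ifs <;> tauto

lemma rvsModel_monotone_iff {n : ℕ} (hn : n % 2 = 0) (F : ℕ → Prop) :
    Monotone (rvsModel n F) ↔ ∀ k, 2 * k + 1 < n → F k := by
  constructor
  · intro hM k hk
    by_contra hF
    have h1 : (2 * k) < n := by omega
    have hle : (⟨2 * k, h1⟩ : Fin n) ≤ ⟨2 * k + 1, hk⟩ := by
      simp [Fin.le_def]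
    have hv := hM hle
    have e1 : (2 * k) / 2 = k := by omega
    have e2 : (2 * k + 1) / 2 = k := by omega
    have v1 : rvsModel n F ⟨2 * k, h1⟩ = 2 * k + 2 := by
      show (if F ((2 * k) / 2) then 2 * k + 1 else if (2 * k) % 2 = 0 then 2 * k + 2 else 2 * k)
        = 2 * k + 2
      rw [e1, if_neg hF, if_pos (by omega : 2 * k % 2 = 0)]
    have v2 : rvsModel n F ⟨2 * k + 1, hk⟩ = 2 * k + 1 := by
      show (if F ((2 * k + 1) / 2) then 2 * k + 1 + 1
          else if (2 * k + 1) % 2 = 0 then 2 * k + 1 + 2 else 2 * k + 1) = 2 * k + 1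
      rw [e2, if_neg hF, if_neg (by omega : ¬ (2 * k + 1) % 2 = 0)]
    rw [v1, v2] at hv
    omega
  · intro hF
    intro a b hab
    have hva : ∀ x : Fin n, rvsModel n F x = (x : ℕ) + 1 := by
      intro x
      have hx : 2 * ((x : ℕ) / 2) + 1 < n := by
        have := x.isLt
        omega
      unfold rvsModel
      rw [if_pos (hF _ hx)]
    rw [hva a, hva b]
    have : (a : ℕ) ≤ (b : ℕ) := hab
    omega

lemma rvs_bonferroni {Ω : Type} [MeasurableSpace Ω] (μ : Measure Ω) {ι : Type*} [DecidableEq ι]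
    (B : ι → Set Ω) (hB : ∀ k, MeasurableSet (B k)) (s : Finset ι) :
    ∑ k ∈ s, μ (B k) ≤ μ (⋃ k ∈ s, B k) + ∑ p ∈ s.offDiag, μ (B p.1 ∩ B p.2) := by
  induction s using Finset.induction_on with
  | empty => simp
  | insert _ _ ha ih =>
    rename_i a s
    rw [Finset.sum_insert ha, Finset.set_biUnion_insert]
    set U := ⋃ k ∈ s, B k with hU
    have hUm : MeasurableSet U := MeasurableSet.biUnion s.countable_toSet (fun k _ => hB k)
    have key : μ (B a) + μ U = μ (B a ∪ U) + μ (B a ∩ U) := (measure_union_add_inter' (hB a) U).symm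
    have hsub : μ (B a ∩ U) ≤ ∑ p ∈ ({a} ×ˢ s : Finset (ι × ι)), μ (B p.1 ∩ B p.2) := by
      have : B a ∩ U = ⋃ k ∈ s, (B a ∩ B k) := by
        rw [hU, Set.inter_iUnion₂]
      rw [this]
      refine le_trans (measure_biUnion_finset_le s _) ?_
      rw [Finset.singleton_product, Finset.sum_map]
      simp
    have hoff : s.offDiag ∪ {a} ×ˢ s ⊆ (insert a s).offDiag := by
      rw [Finset.offDiag_insert (has := ha)]
      intro p hp
      rcases Finset.mem_union.mp hp with h | h
      · exact Finset.mem_union.mpr (Or.inl (Finset.mem_union.mpr (Or.inl h)))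
      · exact Finset.mem_union.mpr (Or.inl (Finset.mem_union.mpr (Or.inr h)))
    have hdisj : Disjoint s.offDiag ({a} ×ˢ s : Finset (ι × ι)) := by
      rw [Finset.disjoint_left]
      intro p hp hp'
      have h1 : p.1 ∈ s := (Finset.mem_offDiag.mp hp).1
      have h2 : p.1 = a := Finset.mem_singleton.mp (Finset.mem_product.mp hp').1
      exact ha (h2 ▸ h1)
    calc μ (B a) + ∑ k ∈ s, μ (B k)
        ≤ μ (B a) + (μ U + ∑ p ∈ s.offDiag, μ (B p.1 ∩ B p.2)) := by
          exact add_le_add_right ih _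
      _ = (μ (B a ∪ U) + μ (B a ∩ U)) + ∑ p ∈ s.offDiag, μ (B p.1 ∩ B p.2) := by
          rw [← key]; ring
      _ ≤ μ (B a ∪ U) + (∑ p ∈ ({a} ×ˢ s : Finset (ι × ι)), μ (B p.1 ∩ B p.2)
            + ∑ p ∈ s.offDiag, μ (B p.1 ∩ B p.2)) := by
          rw [← add_assoc]
          exact add_le_add (add_le_add_right hsub _) le_rfl
      _ ≤ μ (B a ∪ U) + ∑ p ∈ (insert a s).offDiag, μ (B p.1 ∩ B p.2) := by
          refine add_le_add_right ?_ _
          rw [add_comm, ← Finset.sum_union hdisj]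
          exact Finset.sum_le_sum_of_subset hoff

lemma rvs_state {n : ℕ} {Ω : Type} (pair : ℕ → Ω → Fin n × Fin n)
    (A : ℕ → Ω → Fin n → ℕ)
    (hlt : ∀ t ω, (pair t ω).1 < (pair t ω).2)
    (hA0 : ∀ ω, A 0 ω = fun i : Fin n => if (i : ℕ) % 2 = 0 then (i : ℕ) + 2 else (i : ℕ))
    (hstep : ∀ t ω, A (t + 1) ω =
      if A t ω (pair t ω).2 < A t ω (pair t ω).1
        then (A t ω) ∘ (Equiv.swap (pair t ω).1 (pair t ω).2) else A t ω)
    (t : ℕ) (ω : Ω) :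
    A t ω = rvsModel n
      (fun k => ∃ s < t, ((pair s ω).1 : ℕ) = 2 * k ∧ ((pair s ω).2 : ℕ) = 2 * k + 1) := by
  induction t with
  | zero =>
    rw [hA0]
    funext x
    have h0 : ¬ (∃ s, s < 0 ∧ ((pair s ω).1 : ℕ) = 2 * ((x : ℕ) / 2) ∧
        ((pair s ω).2 : ℕ) = 2 * ((x : ℕ) / 2) + 1) := by
      rintro ⟨s, hs, -⟩
      exact Nat.not_lt_zero s hs
    show _ = rvsModel n _ x
    unfold rvsModel
    rw [if_neg h0]
  | succ t ih =>
    rw [hstep t ω, ih]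
    set F := fun k => ∃ s < t, ((pair s ω).1 : ℕ) = 2 * k ∧ ((pair s ω).2 : ℕ) = 2 * k + 1
      with hF
    set i := (pair t ω).1 with hi
    set j := (pair t ω).2 with hjdef
    have hij : (i : ℕ) < (j : ℕ) := hlt t ω
    have hFsucc : ∀ k, (∃ s < t + 1, ((pair s ω).1 : ℕ) = 2 * k ∧ ((pair s ω).2 : ℕ) = 2 * k + 1)
        ↔ (F k ∨ ((i : ℕ) = 2 * k ∧ (j : ℕ) = 2 * k + 1)) := by
      intro k
      constructor
      · rintro ⟨s, hs, h1, h2⟩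
        rcases Nat.lt_succ_iff_lt_or_eq.mp hs with h | rfl
        · exact Or.inl ⟨s, h, h1, h2⟩
        · exact Or.inr ⟨h1, h2⟩
      · rintro (⟨s, hs, h1, h2⟩ | ⟨h1, h2⟩)
        · exact ⟨s, Nat.lt_succ_of_lt hs, h1, h2⟩
        · exact ⟨t, Nat.lt_succ_self t, h1, h2⟩
    by_cases hc : ((j : ℕ) = (i : ℕ) + 1) ∧ (i : ℕ) % 2 = 0 ∧ ¬ F ((i : ℕ) / 2)
    · obtain ⟨hc1, hc2, hc3⟩ := hc
      have hswap : rvsModel n F j < rvsModel n F i := by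
        have hj2 : (j : ℕ) / 2 = (i : ℕ) / 2 := by omega
        unfold rvsModel
        rw [hj2, if_neg hc3, if_neg hc3, if_pos hc2, if_neg (by omega : ¬ (j : ℕ) % 2 = 0)]
        omega
      rw [if_pos hswap, rvsModel_swap F i j hc1 hc2 hc3]
      have hPQ : (fun k => F k ∨ k = (i : ℕ) / 2) =
          (fun k => ∃ s < t + 1, ((pair s ω).1 : ℕ) = 2 * k ∧ ((pair s ω).2 : ℕ) = 2 * k + 1) := by
        funext k
        refine propext ?_
        rw [hFsucc k]
        constructor
        · rintro (h | h)
          · exact Or.inl h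
          · exact Or.inr (by omega)
        · rintro (h | h)
          · exact Or.inl h
          · exact Or.inr (by omega)
      rw [hPQ]
    · have hnoswap : ¬ (rvsModel n F j < rvsModel n F i) :=
        not_lt.mpr (rvsModel_no_inv F i j hij hc)
      rw [if_neg hnoswap]
      have hPQ : F =
          (fun k => ∃ s < t + 1, ((pair s ω).1 : ℕ) = 2 * k ∧ ((pair s ω).2 : ℕ) = 2 * k + 1) := by
        funext k
        refine propext ?_
        rw [hFsucc k]
        constructor
        · exact Or.inl
        · rintro (h | ⟨h1, h2⟩)
          · exact h
          · have hk : (i : ℕ) / 2 = k := by omega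
            by_contra hFk
            exact hc ⟨by omega, by omega, by rw [hk]; exact hFk⟩
      rw [hPQ]

set_option maxHeartbeats 2000000 in
/-- **Random inversion sort, lower bound.**
For even `n`, start from the array `(2, 1, 4, 3, …, n, n−1)`, i.e. position `i`
(0-indexed) holds `i + 2` if `i` is even and `i` if `i` is odd. In each iteration an
unordered pair of distinct positions (encoded as an ordered pair `pair t` with increasing
components, chosen uniformly and independently of everything else) is chosen and the
entries are swapped iff they form an inversion. `T` is the first iteration after which
the array has no inversion. Then `E[T] ≥ c n² ln n` for a universal constant `c > 0`. -/
theorem random_inversion_sort_lower_bound :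
    ∃ c : ℝ, 0 < c ∧
      ∀ n : ℕ, 2 ≤ n → Even n →
      ∀ (Ω : Type) (_ : MeasurableSpace Ω) (μ : Measure Ω), IsProbabilityMeasure μ →
      ∀ (pair : ℕ → Ω → Fin n × Fin n) (A : ℕ → Ω → Fin n → ℕ),
      (∀ t, Measurable (pair t)) →
      (∀ t ω, (pair t ω).1 < (pair t ω).2) →
      iIndepFun pair μ →
      (∀ t : ℕ, ∀ i j : Fin n, i < j →
        μ {ω | pair t ω = (i, j)} = ((n.choose 2 : ENNReal))⁻¹) →
      (∀ ω, A 0 ω = fun i : Fin n => if (i : ℕ) % 2 = 0 then (i : ℕ) + 2 else (i : ℕ)) →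
      (∀ t ω, A (t + 1) ω =
        if A t ω (pair t ω).2 < A t ω (pair t ω).1
          then (A t ω) ∘ (Equiv.swap (pair t ω).1 (pair t ω).2)
          else A t ω) →
      ENNReal.ofReal (c * n ^ 2 * Real.log n)
        ≤ ∫⁻ ω, hitTime (fun t ω => Monotone (A t ω)) ω ∂μ := by
  refine ⟨1/32, by norm_num, ?_⟩
  intro n hn2 hneven Ω mΩ μ hμ pair A hmeas hlt hindep hunif hA0 hstep
  have hn2' : n % 2 = 0 := Nat.even_iff.mp hneven
  -- the state of the array at any time
  have hstate := rvs_state pair A hlt hA0 hstep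
  -- monotone iff all blocks fixed
  have hmono : ∀ t ω, Monotone (A t ω) ↔
      ∀ k, 2 * k + 1 < n →
        ∃ s < t, ((pair s ω).1 : ℕ) = 2 * k ∧ ((pair s ω).2 : ℕ) = 2 * k + 1 := by
    intro t ω
    rw [hstate t ω]
    exact rvsModel_monotone_iff hn2' _
  by_cases hn4 : 4 ≤ n
  · -- main case: n ≥ 4
    set m := n / 2 with hm
    set M := n.choose 2 with hMdef
    have hm2 : 2 * m = n := by omega
    have h2M : 2 * M = n * (n - 1) := by
      rw [hMdef, Nat.choose_two_right]
      exact Nat.mul_div_cancel' (Dvd.dvd.mul_right (even_iff_two_dvd.mp hneven) _)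
    have hM6 : 6 ≤ M := by
      have h1 : (6:ℕ) = Nat.choose 4 2 := by decide
      rw [hMdef, h1]
      exact Nat.choose_le_choose 2 hn4
    set Mr := (M : ℝ) with hMrdef
    have hMr6 : (6 : ℝ) ≤ Mr := by
      rw [hMrdef]
      exact_mod_cast hM6
    have hMrpos : (0:ℝ) < Mr := by linarith
    have hnr4 : (4 : ℝ) ≤ (n : ℝ) := by exact_mod_cast hn4
    have h2Mr : 2 * Mr = (n:ℝ) * ((n:ℝ) - 1) := by
      have h1 : ((2 * M : ℕ) : ℝ) = ((n * (n-1) : ℕ) : ℝ) := by rw [h2M]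
      push_cast [Nat.cast_sub (show 1 ≤ n by omega)] at h1
      exact h1
    set tN := ⌈Mr * Real.log n⌉₊ with htN
    have hnrpos : (0:ℝ) < (n:ℝ) := by linarith
    have hlog0 : 0 ≤ Real.log n := Real.log_nonneg (by exact_mod_cast Nat.one_le_cast.mpr (by omega))
    have ht_lb : Mr * Real.log n ≤ (tN : ℝ) := Nat.le_ceil _
    have ht_ub : (tN : ℝ) ≤ Mr * Real.log n + 1 :=
      le_of_lt (Nat.ceil_lt_add_one (by positivity))
    set pR := 1 - Mr⁻¹ with hpR
    set qR := 1 - (Mr⁻¹ + Mr⁻¹) with hqR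
    have hMinv : Mr⁻¹ ≤ 1/6 := by
      rw [← one_div]
      exact one_div_le_one_div_of_le (by norm_num) hMr6
    have hMinv0 : 0 < Mr⁻¹ := inv_pos.mpr hMrpos
    have hp0 : 0 ≤ pR := by rw [hpR]; linarith
    have hq0 : 0 ≤ qR := by rw [hqR]; linarith
    -- events
    have hDmeas : ∀ D : Set (Fin n × Fin n), MeasurableSet D :=
      fun D => (Set.toFinite D).measurableSet
    set D : ℕ → Set (Fin n × Fin n) :=
      fun k => {x | (x.1 : ℕ) = 2*k ∧ (x.2 : ℕ) = 2*k+1} with hD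
    set B : ℕ → Set Ω := fun k => ⋂ s ∈ Finset.range tN, pair s ⁻¹' (D k)ᶜ with hB
    have hBmeas : ∀ k, MeasurableSet (B k) :=
      fun k => MeasurableSet.biInter (Finset.range tN).countable_toSet
        fun s _ => (hmeas s) (hDmeas _)
    have hpre : ∀ s k, k < m → μ (pair s ⁻¹' D k) = (M : ENNReal)⁻¹ := by
      intro s k hk
      have hk2 : 2*k+1 < n := by omega
      have hset : pair s ⁻¹' D k =
          {ω | pair s ω = ((⟨2*k, by omega⟩ : Fin n), (⟨2*k+1, hk2⟩ : Fin n))} := by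
        ext ω
        simp only [Set.mem_preimage, hD, Set.mem_setOf_eq, Prod.ext_iff, Fin.ext_iff]
      rw [hset]
      exact hunif s _ _ (by simp [Fin.lt_def])
    have hcpre : ∀ s k, k < m → μ (pair s ⁻¹' (D k)ᶜ) = 1 - (M:ENNReal)⁻¹ := by
      intro s k hk
      rw [Set.preimage_compl,
        measure_compl ((hmeas s) (hDmeas _)) (measure_ne_top μ _), measure_univ,
        hpre s k hk]
    have hBk : ∀ k, k < m → μ (B k) = (1 - (M:ENNReal)⁻¹) ^ tN := by
      intro k hk
      rw [hB]
      rw [hindep.measure_inter_preimage_eq_mul (Finset.range tN)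
        (sets := fun _ => (D k)ᶜ) (fun s _ => hDmeas _)]
      rw [Finset.prod_congr rfl fun s _ => hcpre s k hk, Finset.prod_const,
        Finset.card_range]
    have hBkl : ∀ k l, k < m → l < m → k ≠ l →
        μ (B k ∩ B l) = (1 - ((M:ENNReal)⁻¹ + (M:ENNReal)⁻¹)) ^ tN := by
      intro k l hk hl hkl
      have hint : B k ∩ B l = ⋂ s ∈ Finset.range tN, pair s ⁻¹' ((D k ∪ D l)ᶜ) := by
        rw [hB]
        ext ω
        simp only [Set.mem_inter_iff, Set.mem_iInter, Set.mem_preimage,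
          Set.mem_compl_iff, Set.mem_union]
        constructor
        · rintro ⟨h1, h2⟩ s hs
          exact fun hor => hor.elim (h1 s hs) (h2 s hs)
        · intro h
          exact ⟨fun s hs hd => h s hs (Or.inl hd), fun s hs hd => h s hs (Or.inr hd)⟩
      rw [hint]
      rw [hindep.measure_inter_preimage_eq_mul (Finset.range tN)
        (sets := fun _ => (D k ∪ D l)ᶜ) (fun s _ => hDmeas _)]
      have hfac : ∀ s, μ (pair s ⁻¹' (D k ∪ D l)ᶜ) = 1 - ((M:ENNReal)⁻¹ + (M:ENNReal)⁻¹) := by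
        intro s
        rw [Set.preimage_compl,
          measure_compl ((hmeas s) (hDmeas _)) (measure_ne_top μ _), measure_univ,
          Set.preimage_union]
        have hdisj : Disjoint (pair s ⁻¹' D k) (pair s ⁻¹' D l) := by
          rw [Set.disjoint_left]
          intro ω h1 h2
          simp only [hD, Set.mem_preimage, Set.mem_setOf_eq] at h1 h2
          omega
        rw [measure_union hdisj ((hmeas s) (hDmeas _)), hpre s k hk, hpre s l hl]
      rw [Finset.prod_congr rfl fun s _ => hfac s, Finset.prod_const, Finset.card_range]
    -- translate to real numbers
    have hinv : ENNReal.ofReal Mr⁻¹ = (M:ENNReal)⁻¹ := by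
      rw [ENNReal.ofReal_inv_of_pos hMrpos, ENNReal.ofReal_natCast]
    have e1 : ENNReal.ofReal pR = 1 - (M:ENNReal)⁻¹ := by
      rw [hpR, ENNReal.ofReal_sub _ (le_of_lt hMinv0), ENNReal.ofReal_one, hinv]
    have e2 : ENNReal.ofReal qR = 1 - ((M:ENNReal)⁻¹ + (M:ENNReal)⁻¹) := by
      rw [hqR, ENNReal.ofReal_sub _ (by positivity), ENNReal.ofReal_one,
        ENNReal.ofReal_add (le_of_lt hMinv0) (le_of_lt hMinv0), hinv]
    set E := ⋃ k ∈ Finset.range m, B k with hE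
    have hEmeas : MeasurableSet E :=
      MeasurableSet.biUnion (Finset.range m).countable_toSet fun k _ => hBmeas k
    have hbon := rvs_bonferroni μ B hBmeas (Finset.range m)
    have hsum1 : ∑ k ∈ Finset.range m, μ (B k)
        = (m : ENNReal) * ENNReal.ofReal (pR ^ tN) := by
      rw [Finset.sum_congr rfl fun k hk => hBk k (Finset.mem_range.mp hk),
        Finset.sum_const, Finset.card_range, nsmul_eq_mul, ← e1,
        ← ENNReal.ofReal_pow hp0]
    have hsum2 : ∑ p ∈ (Finset.range m).offDiag, μ (B p.1 ∩ B p.2)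
        = ((m*m - m : ℕ) : ENNReal) * ENNReal.ofReal (qR ^ tN) := by
      rw [Finset.sum_congr rfl (fun p hp => ?_), Finset.sum_const,
        Finset.offDiag_card, Finset.card_range, nsmul_eq_mul]
      obtain ⟨h1, h2, h3⟩ := Finset.mem_offDiag.mp hp
      rw [hBkl p.1 p.2 (Finset.mem_range.mp h1) (Finset.mem_range.mp h2) h3, ← e2,
        ← ENNReal.ofReal_pow hq0]
    -- real analysis on P := pR ^ tN
    set P := pR ^ tN with hPdef
    have hP0 : 0 ≤ P := pow_nonneg hp0 tN
    have hPub : P ≤ (n:ℝ)⁻¹ := by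
      have hexp1 : pR ≤ Real.exp (-Mr⁻¹) := by
        have := Real.add_one_le_exp (-Mr⁻¹)
        rw [hpR]; linarith
      have h1 : Real.log n ≤ (tN:ℝ) * Mr⁻¹ := by
        rw [← div_eq_mul_inv]
        exact (le_div_iff₀ hMrpos).mpr (by linarith)
      calc P ≤ Real.exp (-Mr⁻¹) ^ tN := pow_le_pow_left₀ hp0 hexp1 tN
        _ = Real.exp ((tN:ℝ) * (-Mr⁻¹)) := (Real.exp_nat_mul _ tN).symm
        _ ≤ Real.exp (-Real.log n) := Real.exp_le_exp.mpr (by nlinarith)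
        _ = (n:ℝ)⁻¹ := by rw [Real.exp_neg, Real.exp_log hnrpos]
    have hM1pos : (0:ℝ) < Mr - 1 := by linarith
    have hlogn_le : Real.log n ≤ (n:ℝ)/2 := by
      have hsn : Real.sqrt n ^ 2 = (n:ℝ) := Real.sq_sqrt (le_of_lt hnrpos)
      have hsnpos : 0 < Real.sqrt n := Real.sqrt_pos.mpr hnrpos
      have hls : Real.log (Real.sqrt n) ≤ Real.sqrt n - 1 :=
        Real.log_le_sub_one_of_pos hsnpos
      have hlog_eq : Real.log n = 2 * Real.log (Real.sqrt n) := by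
        rw [Real.log_sqrt (le_of_lt hnrpos)]; ring
      nlinarith [sq_nonneg (Real.sqrt n - 2)]
    have hkey : 1 + Real.log n + Real.log 2 ≤ Mr * Real.log 2 := by
      have hMl2 : Mr * (0.6931471803 : ℝ) ≤ Mr * Real.log 2 :=
        mul_le_mul_of_nonneg_left (le_of_lt Real.log_two_gt_d9) (by linarith)
      have hl2ub : Real.log 2 < 0.6931471808 := Real.log_two_lt_d9
      nlinarith [sq_nonneg ((n:ℝ) - 4)]
    have hPlb : (2 * (n:ℝ))⁻¹ ≤ P := by
      have hppos : 0 < pR := by rw [hpR]; linarith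
      have hexp2 : Real.exp (-(Mr-1)⁻¹) ≤ pR := by
        have ha := Real.add_one_le_exp ((Mr-1)⁻¹)
        have hexppos := Real.exp_pos ((Mr-1)⁻¹)
        have hid : pR * (1 + (Mr-1)⁻¹) = 1 := by
          rw [hpR]
          field_simp
          ring
        have h1 : 1 ≤ pR * Real.exp ((Mr-1)⁻¹) := by
          calc (1:ℝ) = pR * (1 + (Mr-1)⁻¹) := hid.symm
            _ ≤ pR * Real.exp ((Mr-1)⁻¹) :=
                mul_le_mul_of_nonneg_left (by linarith) (le_of_lt hppos)
        rw [Real.exp_neg, ← one_div]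
        exact (div_le_iff₀ hexppos).mpr (by linarith)
      have htkey : (tN:ℝ) ≤ (Mr - 1) * (Real.log 2 + Real.log n) := by
        have : Mr * Real.log n + 1 ≤ (Mr - 1) * (Real.log 2 + Real.log n) := by
          nlinarith
        linarith
      have h2 : (tN:ℝ) * (Mr-1)⁻¹ ≤ Real.log 2 + Real.log n := by
        rw [← div_eq_mul_inv]
        exact (div_le_iff₀ hM1pos).mpr (by linarith)
      calc (2 * (n:ℝ))⁻¹ = Real.exp (-(Real.log 2 + Real.log n)) := by
            rw [← Real.log_mul (by norm_num) (ne_of_gt hnrpos), Real.exp_neg,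
              Real.exp_log (by linarith)]
        _ ≤ Real.exp ((tN:ℝ) * (-(Mr-1)⁻¹)) := by
            apply Real.exp_le_exp.mpr
            nlinarith
        _ = Real.exp (-(Mr-1)⁻¹) ^ tN := Real.exp_nat_mul _ tN
        _ ≤ P := pow_le_pow_left₀ (le_of_lt (Real.exp_pos _)) hexp2 tN
    -- master inequality
    set mr := (m : ℝ) with hmrdef
    have hmr2 : 2 * mr = (n:ℝ) := by
      rw [hmrdef]
      exact_mod_cast hm2
    have hmrge : (2:ℝ) ≤ mr := by linarith
    have hmm : m ≤ m * m := Nat.le_mul_of_pos_left m (by omega : 0 < m)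
    have hN2 : ((m*m - m : ℕ) : ℝ) = mr * mr - mr := by
      push_cast [Nat.cast_sub hmm]
      ring
    have hα1 : mr * P ≤ 1/2 := by
      have h1 : mr * P ≤ mr * (n:ℝ)⁻¹ := mul_le_mul_of_nonneg_left hPub (by linarith)
      have h2 : mr * (n:ℝ)⁻¹ = 1/2 := by
        field_simp
        linarith
      linarith
    have hα2 : (1:ℝ)/4 ≤ mr * P := by
      have h1 : mr * (2*(n:ℝ))⁻¹ ≤ mr * P := mul_le_mul_of_nonneg_left hPlb (by linarith)
      have h2 : mr * (2*(n:ℝ))⁻¹ = 1/4 := by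
        field_simp
        linarith
      linarith
    have hqp : qR ≤ pR^2 := by
      rw [hpR, hqR]
      nlinarith [sq_nonneg Mr⁻¹]
    have hQP : qR ^ tN ≤ P^2 := by
      calc qR ^ tN ≤ (pR^2) ^ tN := pow_le_pow_left₀ hq0 hqp tN
        _ = P^2 := by rw [hPdef, ← pow_mul, mul_comm, pow_mul]
    have master : ((m*m - m : ℕ):ℝ) * qR^tN + 1/8 ≤ mr * P := by
      have hq' : ((m*m - m : ℕ):ℝ) * qR^tN ≤ (mr*P)^2 := by
        rw [hN2]
        calc (mr*mr - mr) * qR^tN ≤ (mr*mr) * P^2 := by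
              apply mul_le_mul (by nlinarith) hQP (pow_nonneg hq0 tN) (by nlinarith)
          _ = (mr*P)^2 := by ring
      nlinarith [mul_nonneg (by linarith : (0:ℝ) ≤ mr*P - 1/4) (by linarith : (0:ℝ) ≤ 1/2 - mr*P)]
    -- conclude μ E ≥ 1/8
    have hE8 : ENNReal.ofReal (1/8) ≤ μ E := by
      have h1 : ENNReal.ofReal (mr * P) ≤ μ E
          + ENNReal.ofReal (((m*m - m : ℕ):ℝ) * qR^tN) := by
        have hh : ENNReal.ofReal (mr * P) = (m : ENNReal) * ENNReal.ofReal P := by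
          rw [ENNReal.ofReal_mul (Nat.cast_nonneg m), ENNReal.ofReal_natCast]
        have hh2 : ENNReal.ofReal (((m*m - m : ℕ):ℝ) * qR^tN)
            = ((m*m - m : ℕ) : ENNReal) * ENNReal.ofReal (qR^tN) := by
          rw [ENNReal.ofReal_mul (Nat.cast_nonneg _), ENNReal.ofReal_natCast]
        rw [hh, hh2, ← hsum1, ← hsum2]
        exact hbon
      have h2 : ENNReal.ofReal (((m*m - m : ℕ):ℝ) * qR^tN) + ENNReal.ofReal (1/8)
          ≤ ENNReal.ofReal (((m*m - m : ℕ):ℝ) * qR^tN) + μ E := by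
        rw [← ENNReal.ofReal_add (by positivity) (by norm_num)]
        calc ENNReal.ofReal (((m*m - m : ℕ):ℝ) * qR^tN + 1/8)
            ≤ ENNReal.ofReal (mr * P) := ENNReal.ofReal_le_ofReal master
          _ ≤ μ E + ENNReal.ofReal (((m*m - m : ℕ):ℝ) * qR^tN) := h1
          _ = ENNReal.ofReal (((m*m - m : ℕ):ℝ) * qR^tN) + μ E := add_comm _ _
      exact (ENNReal.add_le_add_iff_left ENNReal.ofReal_ne_top).mp h2
    -- on E, the hitting time is at least tN
    have hhit : ∀ ω ∈ E, (tN : ENNReal) ≤ hitTime (fun t ω => Monotone (A t ω)) ω := by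
      intro ω hω
      rw [hE] at hω
      simp only [Set.mem_iUnion] at hω
      obtain ⟨k, hk, hωB⟩ := hω
      have hkm : k < m := Finset.mem_range.mp hk
      have hnotD : ∀ s < tN, ¬ (((pair s ω).1 : ℕ) = 2*k ∧ ((pair s ω).2 : ℕ) = 2*k+1) := by
        intro s hs
        have h := Set.mem_iInter₂.mp hωB s (Finset.mem_range.mpr hs)
        simpa [hD] using h
      refine le_sInf ?_
      rintro b ⟨nn, rfl, hmn⟩
      by_contra hlt'
      push_neg at hlt'
      have hnnlt : nn < tN := by exact_mod_cast hlt'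
      obtain ⟨s, hs, h1, h2⟩ := (hmono nn ω).mp hmn k (by omega)
      exact hnotD s (lt_trans hs hnnlt) ⟨h1, h2⟩
    -- final chain
    calc ENNReal.ofReal (1/32 * (n:ℝ)^2 * Real.log n)
        ≤ ENNReal.ofReal (Mr * Real.log n) * ENNReal.ofReal (1/8) := by
          rw [← ENNReal.ofReal_mul (by positivity)]
          apply ENNReal.ofReal_le_ofReal
          have h4M : (n:ℝ)^2 ≤ 4 * Mr := by nlinarith
          have := mul_le_mul_of_nonneg_right
            (show (1/32 : ℝ) * (n:ℝ)^2 ≤ Mr * (1/8) by linarith) hlog0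
          nlinarith [this]
      _ ≤ (tN : ENNReal) * μ E := by
          apply mul_le_mul' ?_ hE8
          calc ENNReal.ofReal (Mr * Real.log n) ≤ ENNReal.ofReal (tN:ℝ) :=
                ENNReal.ofReal_le_ofReal ht_lb
            _ = (tN : ENNReal) := ENNReal.ofReal_natCast tN
      _ = ∫⁻ ω in E, (tN : ENNReal) ∂μ := by rw [setLIntegral_const]
      _ = ∫⁻ ω, E.indicator (fun _ => (tN : ENNReal)) ω ∂μ := by
          rw [lintegral_indicator hEmeas]
      _ ≤ ∫⁻ ω, hitTime (fun t ω => Monotone (A t ω)) ω ∂μ := by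
          apply lintegral_mono
          intro ω
          by_cases hω : ω ∈ E
          · rw [Set.indicator_of_mem hω]
            exact hhit ω hω
          · rw [Set.indicator_of_notMem hω]
            exact zero_le
  · -- trivial case: n = 2
    have hn : n = 2 := by omega
    subst hn
    -- hit time is at least 1 always
    have hT1 : ∀ ω, (1 : ENNReal) ≤ hitTime (fun t ω => Monotone (A t ω)) ω := by
      intro ω
      refine le_sInf ?_
      rintro b ⟨nn, rfl, hm⟩
      rcases Nat.eq_zero_or_pos nn with rfl | hpos
      · exfalso
        have := (hmono 0 ω).mp hm 0 (by norm_num)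
        obtain ⟨s, hs, -⟩ := this
        exact Nat.not_lt_zero s hs
      · exact_mod_cast Nat.one_le_cast.mpr hpos
    calc ENNReal.ofReal (1/32 * (2:ℕ)^2 * Real.log 2)
        ≤ 1 := by
          refine ENNReal.ofReal_le_one.mpr ?_
          have := Real.log_two_lt_d9
          norm_num
          nlinarith [Real.log_two_lt_d9]
      _ = ∫⁻ _, 1 ∂μ := by rw [lintegral_one, measure_univ]
      _ ≤ _ := lintegral_mono fun ω => hT1 ω
end

section
/- Absorption time of the Moran process for r > 1: There is a constant C > 0 such that for every n ≥ 2 and every r > 1 the following holds. Let (Y_t)_{t∈ℕ} be the Moran chain with fitness parameter r on n individuals started at Y_0 = n − 1, and let T = inf{t ∈ ℕ : Y_t ∈ {0, n}} be its absorption time. Then E[T] ≤ C · (r/(r − 1)) · n · ln n. -/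
set_option autoImplicit false

open MeasureTheory ProbabilityTheory

/-- The one-step up-probability of the Moran process with fitness parameter `r` on `n`
individuals, at `k` non-mutants: `p(k) = (k/(k + r(n−k))) · ((n−k)/n)`. -/
noncomputable def moranP (n : ℕ) (r : ℝ) (k : ℕ) : ℝ :=
  ((k : ℝ) / ((k : ℝ) + r * ((n : ℝ) - (k : ℝ)))) * (((n : ℝ) - (k : ℝ)) / (n : ℝ))

/-- `Y` is (a copy of) the Moran chain with fitness parameter `r` on `n` individuals:
`Y t` is the number of non-mutants at time `t`; conditional on any positive-probability
history, from an interior state `k` the chain moves up with probability `p(k)`, down with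
probability `r·p(k)` and stays otherwise, while `0` and `n` are absorbing. -/
def IsMoranChain {Ω : Type} [MeasurableSpace Ω] (μ : Measure Ω)
    (n : ℕ) (r : ℝ) (Y : ℕ → Ω → ℕ) : Prop :=
  (∀ t, Measurable (Y t)) ∧ (∀ t ω, Y t ω ≤ n) ∧
  ∀ t : ℕ, ∀ h : ℕ → ℕ, μ {ω | ∀ i ≤ t, Y i ω = h i} ≠ 0 →
    ((0 < h t → h t < n →
      (ProbabilityTheory.cond μ {ω | ∀ i ≤ t, Y i ω = h i}) {ω | Y (t + 1) ω = h t + 1}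
          = ENNReal.ofReal (moranP n r (h t)) ∧
      (ProbabilityTheory.cond μ {ω | ∀ i ≤ t, Y i ω = h i}) {ω | Y (t + 1) ω = h t - 1}
          = ENNReal.ofReal (r * moranP n r (h t)) ∧
      (ProbabilityTheory.cond μ {ω | ∀ i ≤ t, Y i ω = h i}) {ω | Y (t + 1) ω = h t}
          = ENNReal.ofReal (1 - (1 + r) * moranP n r (h t))) ∧
    ((h t = 0 ∨ h t = n) →
      (ProbabilityTheory.cond μ {ω | ∀ i ≤ t, Y i ω = h i}) {ω | Y (t + 1) ω = h t} = 1))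

/-- `1/p(k)` written explicitly. -/
noncomputable def mq (n : ℕ) (r : ℝ) (k : ℕ) : ℝ :=
  (n : ℝ) * ((k : ℝ) + r * ((n : ℝ) - (k : ℝ))) / ((k : ℝ) * ((n : ℝ) - (k : ℝ)))

noncomputable def md (n : ℕ) (r : ℝ) (k : ℕ) : ℝ :=
  ∑ j ∈ Finset.Ico k n, mq n r j * (1 / r) ^ (j + 1 - k)

noncomputable def mg (n : ℕ) (r : ℝ) (k : ℕ) : ℝ :=
  ∑ m ∈ Finset.range k, md n r (m + 1)

lemma mq_nonneg {n k : ℕ} {r : ℝ} (hr : 1 < r) (hk : k < n) : 0 ≤ mq n r k := by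
  have h1 : ((k : ℝ) ≤ n) := by exact_mod_cast hk.le
  have h2 : (0:ℝ) ≤ (n : ℝ) - k := by linarith
  unfold mq
  apply div_nonneg
  · have : (0:ℝ) ≤ r * ((n:ℝ) - k) := by positivity
    positivity
  · positivity

lemma md_nonneg {n k : ℕ} {r : ℝ} (hr : 1 < r) : 0 ≤ md n r k := by
  unfold md
  apply Finset.sum_nonneg
  intro j hj
  rw [Finset.mem_Ico] at hj
  have := mq_nonneg (n := n) hr hj.2
  have hr0 : (0:ℝ) < 1 / r := by positivity
  positivity

lemma mq_self (n : ℕ) (r : ℝ) : mq n r n = 0 := by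
  unfold mq; simp

lemma md_rec {n k : ℕ} {r : ℝ} (hr : 1 < r) (hk : k ≤ n) :
    r * md n r k = mq n r k + md n r (k + 1) := by
  have hr0 : r ≠ 0 := by positivity
  rcases eq_or_lt_of_le hk with h | h
  · subst h
    rw [mq_self]
    unfold md
    rw [Finset.Ico_self]
    have : Finset.Ico (k+1) k = ∅ := Finset.Ico_eq_empty (by omega)
    rw [this]
    simp
  · unfold md
    rw [Finset.sum_eq_sum_Ico_succ_bot h]
    have hstep : ∀ j ∈ Finset.Ico (k+1) n,
        mq n r j * (1/r) ^ (j + 1 - (k+1)) = r * (mq n r j * (1/r) ^ (j + 1 - k)) := by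
      intro j hj
      rw [Finset.mem_Ico] at hj
      have hjk : j + 1 - k = (j + 1 - (k+1)) + 1 := by omega
      rw [hjk, pow_succ]
      field_simp
    rw [Finset.sum_congr rfl hstep, ← Finset.mul_sum, Nat.add_sub_cancel_left, pow_one]
    field_simp

lemma mg_mono {n : ℕ} {r : ℝ} (hr : 1 < r) {k l : ℕ} (h : k ≤ l) : mg n r k ≤ mg n r l := by
  unfold mg
  apply Finset.sum_le_sum_of_subset_of_nonneg (Finset.range_subset_range.mpr h)
  intro i _ _
  exact md_nonneg hr

lemma moranP_mul_mq {n k : ℕ} {r : ℝ} (hr : 1 < r) (hk0 : 0 < k) (hkn : k < n) :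
    moranP n r k * mq n r k = 1 := by
  have hkr : (0:ℝ) < k := by exact_mod_cast hk0
  have hnk : (0:ℝ) < (n:ℝ) - k := by
    have : (k:ℝ) < n := by exact_mod_cast hkn
    linarith
  have hn : (0:ℝ) < n := by linarith
  have hrp : (0:ℝ) < r := by linarith
  have hden : (0:ℝ) < (k:ℝ) + r * ((n:ℝ) - k) := by nlinarith
  unfold moranP mq
  field_simp

lemma moranP_nonneg {n k : ℕ} {r : ℝ} (hr : 1 < r) (hk : k ≤ n) : 0 ≤ moranP n r k := by
  have h2 : (0:ℝ) ≤ (n : ℝ) - k := by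
    have : ((k:ℝ) ≤ n) := by exact_mod_cast hk
    linarith
  have hrp : (0:ℝ) < r := by linarith
  unfold moranP
  have : (0:ℝ) ≤ r * ((n:ℝ) - k) := by positivity
  apply mul_nonneg (div_nonneg (by positivity) (by positivity)) (div_nonneg h2 (by positivity))

lemma moranP_le {n k : ℕ} {r : ℝ} (hr : 1 < r) (hk : k ≤ n) (hn : 0 < n) :
    (1 + r) * moranP n r k ≤ 1 := by
  have hkr : (0:ℝ) ≤ k := by positivity
  have h2 : (0:ℝ) ≤ (n : ℝ) - k := by
    have : ((k:ℝ) ≤ n) := by exact_mod_cast hk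
    linarith
  have hnr : (0:ℝ) < n := by exact_mod_cast hn
  have hrp : (0:ℝ) < r := by linarith
  have hden : (0:ℝ) < (k:ℝ) + r * ((n:ℝ) - k) := by
    rcases Nat.eq_zero_or_pos k with h | h
    · have : (k:ℝ) = 0 := by exact_mod_cast h
      rw [this] at *
      nlinarith
    · have : (0:ℝ) < k := by exact_mod_cast h
      nlinarith
  unfold moranP
  rw [div_mul_div_comm]
  have heq : (1 + r) * ((k:ℝ) * ((n:ℝ) - k) / (((k:ℝ) + r * ((n:ℝ) - k)) * n))
      = ((1 + r) * ((k:ℝ) * ((n:ℝ) - k))) / (((k:ℝ) + r * ((n:ℝ) - k)) * n) := by ring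
  rw [heq, div_le_one (by positivity)]
  nlinarith [sq_nonneg ((n:ℝ) - k)]

lemma drift {n k : ℕ} {r : ℝ} (hr : 1 < r) (hk0 : 0 < k) (hkn : k < n) :
    moranP n r k * mg n r (k + 1) + r * moranP n r k * mg n r (k - 1)
      + (1 - (1 + r) * moranP n r k) * mg n r k + 1 ≤ mg n r k := by
  have hp := moranP_mul_mq hr hk0 hkn
  have h1 : mg n r (k + 1) = mg n r k + md n r (k + 1) := by
    unfold mg; rw [Finset.sum_range_succ]
  have h2 : mg n r k = mg n r (k - 1) + md n r k := by
    conv_lhs => rw [show k = (k - 1) + 1 by omega]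
    unfold mg; rw [Finset.sum_range_succ]
    congr 2
    omega
  have hrec : r * md n r k = mq n r k + md n r (k + 1) := md_rec hr hkn.le
  have h2' : mg n r (k - 1) = mg n r k - md n r k := by linarith
  have key : moranP n r k * (md n r (k + 1) - r * md n r k) = -1 := by
    have hmd : md n r (k + 1) - r * md n r k = -mq n r k := by linarith
    rw [hmd, mul_neg, hp]
  rw [h1, h2']
  have expand : moranP n r k * (mg n r k + md n r (k + 1))
      + r * moranP n r k * (mg n r k - md n r k)
      + (1 - (1 + r) * moranP n r k) * mg n r k + 1
      = mg n r k + (moranP n r k * (md n r (k + 1) - r * md n r k) + 1) := by ring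
  rw [expand, key]
  simp

lemma mg_le_Q {n : ℕ} {r : ℝ} (hr : 1 < r) :
    mg n r n ≤ (∑ m ∈ Finset.range n, mq n r (m + 1)) / (r - 1) := by
  set S := mg n r n with hS
  set Q := ∑ m ∈ Finset.range n, mq n r (m + 1) with hQ
  have hmd1 : md n r (n + 1) = 0 := by
    unfold md
    rw [Finset.Ico_eq_empty (by omega)]
    simp
  have hrec : r * S = Q + ∑ m ∈ Finset.range n, md n r (m + 2) := by
    rw [hS]
    unfold mg
    rw [Finset.mul_sum]
    rw [Finset.sum_congr rfl (fun m hm => md_rec hr (by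
      simp only [Finset.mem_range] at hm; omega))]
    rw [Finset.sum_add_distrib]
  have hshift : ∑ m ∈ Finset.range n, md n r (m + 2) = S - md n r 1 := by
    have h1 : ∑ m ∈ Finset.range (n + 1), md n r (m + 1)
        = (∑ m ∈ Finset.range n, md n r (m + 1 + 1)) + md n r (0 + 1) :=
      Finset.sum_range_succ' (fun m => md n r (m + 1)) n
    have h2 : ∑ m ∈ Finset.range (n + 1), md n r (m + 1)
        = S + md n r (n + 1) := Finset.sum_range_succ (fun m => md n r (m + 1)) n
    rw [hmd1] at h2
    have : ∀ m, m + 2 = m + 1 + 1 := fun m => rfl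
    simp only [this]
    rw [h2] at h1
    simp only [Nat.zero_add] at h1
    linarith
  have hd1 : 0 ≤ md n r 1 := md_nonneg hr
  have hrm : (0:ℝ) < r - 1 := by linarith
  rw [le_div_iff₀ hrm]
  rw [hshift] at hrec
  linarith

lemma mq_le {n k : ℕ} {r : ℝ} (hr : 1 < r) (hk0 : 0 < k) (hk : k ≤ n) :
    mq n r k ≤ r * n * (1 / (k:ℝ) + 1 / ((n:ℝ) - k)) := by
  have hkr : (0:ℝ) < k := by exact_mod_cast hk0
  have hrp : (0:ℝ) < r := by linarith
  rcases eq_or_lt_of_le hk with h | h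
  · subst h
    rw [mq_self]
    simp
    positivity
  · have hnk : (0:ℝ) < (n:ℝ) - k := by
      have : (k:ℝ) < n := by exact_mod_cast h
      linarith
    have hn : (0:ℝ) < n := by linarith
    have hnum : (n:ℝ) * ((k:ℝ) + r * ((n:ℝ) - k)) ≤ (n:ℝ) * (r * n) := by
      have : (k:ℝ) + r * ((n:ℝ) - k) ≤ r * n := by nlinarith
      nlinarith
    have h1 : mq n r k ≤ (n:ℝ) * (r * n) / ((k:ℝ) * ((n:ℝ) - k)) := by
      unfold mq
      apply div_le_div_of_nonneg_right hnum (by positivity) |>.trans_eq rfl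
    refine h1.trans (le_of_eq ?_)
    field_simp
    ring

lemma Q_le {n : ℕ} {r : ℝ} (hr : 1 < r) (hn : 2 ≤ n) :
    ∑ m ∈ Finset.range n, mq n r (m + 1) ≤ r * n * (2 * (1 + Real.log n)) := by
  have hrp : (0:ℝ) < r := by linarith
  have hnn : (0:ℝ) < n := by positivity
  have step1 : ∑ m ∈ Finset.range n, mq n r (m + 1)
      ≤ ∑ m ∈ Finset.range n, r * n * (1 / ((m+1:ℕ):ℝ) + 1 / ((n:ℝ) - ((m+1:ℕ):ℝ))) := by
    apply Finset.sum_le_sum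
    intro m hm
    simp only [Finset.mem_range] at hm
    exact mq_le hr (by omega) (by omega)
  have hH : (harmonic n : ℝ) ≤ 1 + Real.log n := harmonic_le_one_add_log n
  have hHn : ∑ m ∈ Finset.range n, 1 / ((m+1:ℕ):ℝ) = (harmonic n : ℝ) := by
    rw [harmonic]
    push_cast
    simp [one_div]
  have hH2 : ∑ m ∈ Finset.range n, 1 / ((n:ℝ) - ((m+1:ℕ):ℝ)) ≤ (harmonic n : ℝ) := by
    have hcast : ∀ m ∈ Finset.range n,
        1 / ((n:ℝ) - ((m+1:ℕ):ℝ)) = (fun j : ℕ => 1 / (j:ℝ)) (n - 1 - m) := by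
      intro m hm
      simp only [Finset.mem_range] at hm
      have h1 : m + 1 ≤ n := by omega
      have h2 : n - 1 - m = n - (m + 1) := by omega
      simp only [h2]
      congr 1
      rw [Nat.cast_sub h1]
    rw [Finset.sum_congr rfl hcast, Finset.sum_range_reflect (fun j : ℕ => 1 / (j:ℝ)) n]
    obtain ⟨n', rfl⟩ : ∃ n', n = n' + 1 := ⟨n - 1, by omega⟩
    rw [Finset.sum_range_succ' (fun j : ℕ => 1 / (j:ℝ)) n']
    simp only [Nat.cast_zero]
    rw [div_zero, add_zero]
    rw [← hHn]
    apply Finset.sum_le_sum_of_subset_of_nonneg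
    · exact Finset.range_subset_range.mpr (by omega)
    · intro i _ _
      positivity
  have step2 : ∑ m ∈ Finset.range n, r * n * (1 / ((m+1:ℕ):ℝ) + 1 / ((n:ℝ) - ((m+1:ℕ):ℝ)))
      = r * n * ((∑ m ∈ Finset.range n, 1 / ((m+1:ℕ):ℝ))
        + ∑ m ∈ Finset.range n, 1 / ((n:ℝ) - ((m+1:ℕ):ℝ))) := by
    rw [← Finset.mul_sum, Finset.sum_add_distrib]
  refine step1.trans ?_
  rw [step2]
  have hrn : (0:ℝ) ≤ r * n := by positivity
  have : (∑ m ∈ Finset.range n, 1 / ((m+1:ℕ):ℝ))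
        + (∑ m ∈ Finset.range n, 1 / ((n:ℝ) - ((m+1:ℕ):ℝ))) ≤ 2 * (1 + Real.log n) := by
    rw [hHn]
    linarith
  have h1n : (1:ℝ) ≤ n := by exact_mod_cast (by omega : 1 ≤ n)
  nlinarith [Real.log_nonneg h1n]

lemma mg_final {n : ℕ} {r : ℝ} (hr : 1 < r) (hn : 2 ≤ n) :
    mg n r (n - 1) ≤ 10 * (r / (r - 1)) * (n : ℝ) * Real.log n := by
  have hrm : (0:ℝ) < r - 1 := by linarith
  have hrp : (0:ℝ) < r := by linarith
  have hnn : (0:ℝ) < n := by positivity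
  have hL : (1:ℝ)/4 ≤ Real.log n := by
    have h2 : Real.log 2 ≤ Real.log n := by
      apply Real.log_le_log (by norm_num)
      exact_mod_cast hn
    have := Real.log_two_gt_d9
    linarith
  calc mg n r (n - 1) ≤ mg n r n := mg_mono hr (by omega)
    _ ≤ (∑ m ∈ Finset.range n, mq n r (m + 1)) / (r - 1) := mg_le_Q hr
    _ ≤ (r * n * (2 * (1 + Real.log n))) / (r - 1) := by
        apply div_le_div_of_nonneg_right (Q_le hr hn) hrm.le |>.trans_eq rfl
    _ ≤ 10 * (r / (r - 1)) * (n : ℝ) * Real.log n := by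
        rw [div_le_iff₀ hrm]
        have key : r * n * (2 * (1 + Real.log n)) ≤ 10 * r * n * Real.log n := by
          nlinarith [mul_nonneg (mul_pos hrp hnn).le
            (by linarith : (0:ℝ) ≤ 8 * Real.log n - 2)]
        have : 10 * (r / (r - 1)) * (n:ℝ) * Real.log n * (r - 1)
            = 10 * r * n * Real.log n := by
          field_simp
        linarith

lemma hitTime_le_tsum {Ω : Type} (P : ℕ → Ω → Prop) (ω : Ω) :
    hitTime P ω
      ≤ ∑' t : ℕ, Set.indicator {ω' | ∀ i ≤ t, ¬ P i ω'} (fun _ => (1 : ENNReal)) ω := by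
  classical
  by_cases hP : ∃ m, P m ω
  · have h1 : hitTime P ω ≤ (Nat.find hP : ENNReal) :=
      sInf_le ⟨Nat.find hP, rfl, Nat.find_spec hP⟩
    refine h1.trans ?_
    have h2 : ∀ t < Nat.find hP, ω ∈ {ω' | ∀ i ≤ t, ¬ P i ω'} := by
      intro t ht i hi
      exact Nat.find_min hP (lt_of_le_of_lt hi ht)
    calc ((Nat.find hP : ℕ) : ENNReal)
        = ∑ t ∈ Finset.range (Nat.find hP), 1 := by simp
      _ = ∑ t ∈ Finset.range (Nat.find hP),
            Set.indicator {ω' | ∀ i ≤ t, ¬ P i ω'} (fun _ => (1 : ENNReal)) ω := by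
          apply Finset.sum_congr rfl
          intro t ht
          rw [Finset.mem_range] at ht
          rw [Set.indicator_of_mem (h2 t ht)]
      _ ≤ _ := ENNReal.sum_le_tsum _
  · have hall : ∀ t : ℕ,
        Set.indicator {ω' | ∀ i ≤ t, ¬ P i ω'} (fun _ => (1 : ENNReal)) ω = 1 := by
      intro t
      have hmem : ω ∈ {ω' | ∀ i ≤ t, ¬ P i ω'} := fun i _ hPi => hP ⟨i, hPi⟩
      exact Set.indicator_of_mem hmem _
    rw [tsum_congr hall, ENNReal.tsum_const_eq_top_of_ne_zero one_ne_zero]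
    exact le_top

lemma lintegral_comp_eq_sum {Ω : Type} [MeasurableSpace Ω] (μ : Measure Ω) {E : Set Ω}
    (hE : MeasurableSet E) {Z : Ω → ℕ} (hZ : Measurable Z) {n : ℕ} (hZn : ∀ ω, Z ω ≤ n)
    (G : ℕ → ENNReal) :
    ∫⁻ ω in E, G (Z ω) ∂μ = ∑ j ∈ Finset.range (n + 1), G j * μ (E ∩ {ω | Z ω = j}) := by
  have hSm : ∀ j : ℕ, MeasurableSet {ω | Z ω = j} := fun j => hZ (measurableSet_singleton j)
  have hpt : ∀ ω, G (Z ω) = ∑ j ∈ Finset.range (n + 1),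
      Set.indicator {ω' | Z ω' = j} (fun _ => G j) ω := by
    intro ω
    rw [Finset.sum_eq_single (Z ω)]
    · exact (Set.indicator_of_mem (by exact rfl) _).symm
    · intro j _ hj
      exact Set.indicator_of_notMem (fun hmem => hj (by exact hmem.symm ▸ rfl)) _
    · intro hnot
      exact absurd (Finset.mem_range.mpr (Nat.lt_succ_of_le (hZn ω))) hnot
  calc ∫⁻ ω in E, G (Z ω) ∂μ
      = ∫⁻ ω in E, ∑ j ∈ Finset.range (n + 1),
          Set.indicator {ω' | Z ω' = j} (fun _ => G j) ω ∂μ := lintegral_congr hpt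
    _ = ∑ j ∈ Finset.range (n + 1), ∫⁻ ω in E,
          Set.indicator {ω' | Z ω' = j} (fun _ => G j) ω ∂μ := by
        apply lintegral_finset_sum
        intro j _
        exact measurable_const.indicator (hSm j)
    _ = ∑ j ∈ Finset.range (n + 1), G j * μ (E ∩ {ω | Z ω = j}) := by
        apply Finset.sum_congr rfl
        intro j _
        rw [lintegral_indicator (hSm j), setLIntegral_const, Measure.restrict_apply (hSm j),
          Set.inter_comm]

lemma step_bound {Ω : Type} [MeasurableSpace Ω] (μ : Measure Ω) [IsProbabilityMeasure μ]
    {n : ℕ} {r : ℝ} {Y : ℕ → Ω → ℕ} (hY : IsMoranChain μ n r Y) (hr : 1 < r) (hn : 2 ≤ n)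
    (G : ℕ → ENNReal)
    (hdrift : ∀ k, 0 < k → k < n →
      ENNReal.ofReal (moranP n r k) * G (k + 1)
        + ENNReal.ofReal (r * moranP n r k) * G (k - 1)
        + ENNReal.ofReal (1 - (1 + r) * moranP n r k) * G k + 1 ≤ G k)
    (t : ℕ) :
    (∫⁻ ω, G (Y (t + 1) ω) ∂μ) + μ {ω | 0 < Y t ω ∧ Y t ω < n}
      ≤ ∫⁻ ω, G (Y t ω) ∂μ := by
  classical
  obtain ⟨hYm, hYle, hcond⟩ := hY
  set ι := Fin (t + 1) → Fin (n + 1) with hι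
  set E : ι → Set Ω := fun v => {ω | ∀ i : Fin (t + 1), Y i ω = v i} with hE
  have hEm : ∀ v, MeasurableSet (E v) := by
    intro v
    have : E v = ⋂ i : Fin (t + 1), (Y i) ⁻¹' {(v i : ℕ)} := by
      ext ω; simp [hE, Set.mem_iInter]
    rw [this]
    exact MeasurableSet.iInter fun i => (hYm i) (measurableSet_singleton _)
  have hEd : Pairwise (Function.onFun Disjoint E) := by
    intro v w hvw
    rw [Function.onFun, Set.disjoint_left]
    intro ω hv hw
    apply hvw
    funext i
    have h1 : ((v i : ℕ)) = ((w i : ℕ)) := (hv i).symm.trans (hw i)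
    exact Fin.ext h1
  have hEc : ⋃ v, E v = Set.univ := by
    ext ω
    simp only [Set.mem_iUnion, Set.mem_univ, iff_true]
    exact ⟨fun i => ⟨Y i ω, Nat.lt_succ_of_le (hYle i ω)⟩, fun i => rfl⟩
  have hsum : ∀ f : Ω → ENNReal, ∫⁻ ω, f ω ∂μ = ∑ v : ι, ∫⁻ ω in E v, f ω ∂μ := by
    intro f
    rw [← setLIntegral_univ, ← hEc, lintegral_iUnion hEm hEd, tsum_fintype]
  set lt : Fin (t + 1) := Fin.last t with hlt
  set c : ι → ENNReal := fun v => if 0 < (v lt : ℕ) ∧ (v lt : ℕ) < n then μ (E v) else 0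
    with hc
  have claim : ∀ v, (∫⁻ ω in E v, G (Y (t + 1) ω) ∂μ) + c v
      ≤ ∫⁻ ω in E v, G (Y t ω) ∂μ := by
    intro v
    set k : ℕ := (v lt : ℕ) with hk
    set h : ℕ → ℕ := fun i => if hi : i < t + 1 then (v ⟨i, hi⟩ : ℕ) else 0 with hh
    have hht : h t = k := by
      simp only [hh, dif_pos (Nat.lt_succ_self t)]
      rfl
    have hEeq : E v = {ω | ∀ i ≤ t, Y i ω = h i} := by
      ext ω
      constructor
      · intro hω i hi
        simp only [hh]
        rw [dif_pos (by omega : i < t + 1)]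
        exact hω ⟨i, by omega⟩
      · intro hω i
        have := hω i (by omega : (i : ℕ) ≤ t)
        simp only [hh, dif_pos i.isLt] at this
        rw [this]
    by_cases hzero : μ (E v) = 0
    · have hres : μ.restrict (E v) = 0 := Measure.restrict_eq_zero.mpr hzero
      have hcv : c v = 0 := by
        simp only [hc]
        split <;> simp [hzero]
      rw [hres, hcv]
      simp
    · have hne : μ {ω | ∀ i ≤ t, Y i ω = h i} ≠ 0 := by rw [← hEeq]; exact hzero
      have spec := hcond t h hne
      rw [← hEeq, hht] at spec
      have hfin : μ (E v) ≠ ⊤ := measure_ne_top μ _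
      have hk_le : k ≤ n := by
        have := (v lt).isLt
        omega
      have hprob : IsProbabilityMeasure (μ[|E v]) := cond_isProbabilityMeasure hzero
      have hmul : ∀ s : Set Ω, μ (E v ∩ s) = μ (E v) * (μ[|E v]) s := by
        intro s
        rw [cond_apply (hEm v), ← mul_assoc, ENNReal.mul_inv_cancel hzero hfin, one_mul]
      have hexp : ∫⁻ ω in E v, G (Y (t + 1) ω) ∂μ
          = ∑ j ∈ Finset.range (n + 1), G j * (μ (E v) * (μ[|E v]) {ω | Y (t + 1) ω = j}) := by
        rw [lintegral_comp_eq_sum μ (hEm v) (hYm (t + 1)) (hYle (t + 1)) G]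
        exact Finset.sum_congr rfl fun j _ => by rw [hmul]
      have hRHS : ∫⁻ ω in E v, G (Y t ω) ∂μ = G k * μ (E v) := by
        have hcg : ∫⁻ ω in E v, G (Y t ω) ∂μ = ∫⁻ _ in E v, G k ∂μ := by
          apply setLIntegral_congr_fun (hEm v)
          intro ω hω
          have : Y t ω = k := by
            rw [hEeq] at hω
            rw [hω t le_rfl, hht]
          simp only [this]
        rw [hcg, setLIntegral_const]
      have hSm : ∀ j : ℕ, MeasurableSet {ω | Y (t + 1) ω = j} :=
        fun j => (hYm (t + 1)) (measurableSet_singleton j)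
      by_cases hint : 0 < k ∧ k < n
      · -- interior case
        obtain ⟨hA, hB, hC⟩ := spec.1 hint.1 hint.2
        have hp0 : 0 ≤ moranP n r k := moranP_nonneg hr hk_le
        have hp1 : (1 + r) * moranP n r k ≤ 1 := moranP_le hr hk_le (by omega)
        have hrp : (0:ℝ) ≤ r := by linarith
        have hsum3 : (μ[|E v]) {ω | Y (t + 1) ω = k + 1} + (μ[|E v]) {ω | Y (t + 1) ω = k - 1}
            + (μ[|E v]) {ω | Y (t + 1) ω = k} = 1 := by
          rw [hA, hB, hC, ← ENNReal.ofReal_add hp0 (by positivity),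
            ← ENNReal.ofReal_add (by positivity) (by linarith),
            show moranP n r k + r * moranP n r k + (1 - (1 + r) * moranP n r k) = 1 by ring,
            ENNReal.ofReal_one]
        have hunion : (μ[|E v]) ({ω | Y (t + 1) ω = k + 1} ∪ {ω | Y (t + 1) ω = k - 1}
            ∪ {ω | Y (t + 1) ω = k}) = 1 := by
          rw [measure_union ?d1 (hSm k), measure_union ?d2 (hSm (k - 1))]
          · exact hsum3
          case d1 =>
            rw [Set.disjoint_left]
            rintro ω (h1 | h1) h2 <;> simp only [Set.mem_setOf_eq] at h1 h2 <;> omega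
          case d2 =>
            rw [Set.disjoint_left]
            intro ω h1 h2
            simp only [Set.mem_setOf_eq] at h1 h2
            omega
        have hother : ∀ j, j ≠ k + 1 → j ≠ k - 1 → j ≠ k →
            (μ[|E v]) {ω | Y (t + 1) ω = j} = 0 := by
          intro j h1 h2 h3
          have hsub : {ω | Y (t + 1) ω = j} ⊆ ({ω | Y (t + 1) ω = k + 1}
              ∪ {ω | Y (t + 1) ω = k - 1} ∪ {ω | Y (t + 1) ω = k})ᶜ := by
            intro ω hω
            simp only [Set.mem_compl_iff, Set.mem_union, Set.mem_setOf_eq] at hω ⊢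
            omega
          have hcompl : (μ[|E v]) (({ω | Y (t + 1) ω = k + 1}
              ∪ {ω | Y (t + 1) ω = k - 1} ∪ {ω | Y (t + 1) ω = k})ᶜ) = 0 := by
            rw [measure_compl (((hSm (k+1)).union (hSm (k-1))).union (hSm k))
              (measure_ne_top _ _), hunion, measure_univ]
            simp
          exact le_antisymm (hcompl ▸ measure_mono hsub) zero_le
        -- reduce sum to three terms
        have hthree : ({k - 1, k, k + 1} : Finset ℕ) ⊆ Finset.range (n + 1) := by
          intro j hj
          simp only [Finset.mem_insert, Finset.mem_singleton] at hj
          rw [Finset.mem_range]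
          omega
        have hred : ∑ j ∈ Finset.range (n + 1), G j * (μ (E v) * (μ[|E v]) {ω | Y (t + 1) ω = j})
            = ∑ j ∈ ({k - 1, k, k + 1} : Finset ℕ),
                G j * (μ (E v) * (μ[|E v]) {ω | Y (t + 1) ω = j}) := by
          symm
          apply Finset.sum_subset hthree
          intro j _ hj
          simp only [Finset.mem_insert, Finset.mem_singleton] at hj
          push_neg at hj
          rw [hother j (by omega) (by omega) (by omega)]
          simp
        have hexpand : ∑ j ∈ ({k - 1, k, k + 1} : Finset ℕ),
              G j * (μ (E v) * (μ[|E v]) {ω | Y (t + 1) ω = j})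
            = G (k - 1) * (μ (E v) * (μ[|E v]) {ω | Y (t + 1) ω = k - 1})
              + G k * (μ (E v) * (μ[|E v]) {ω | Y (t + 1) ω = k})
              + G (k + 1) * (μ (E v) * (μ[|E v]) {ω | Y (t + 1) ω = k + 1}) := by
          rw [Finset.sum_insert (by simp only [Finset.mem_insert, Finset.mem_singleton]; omega),
            Finset.sum_insert (by simp only [Finset.mem_singleton]; omega),
            Finset.sum_singleton]
          ring
        have hcv : c v = μ (E v) := by
          simp only [hc]
          rw [if_pos]
          exact hint
        rw [hexp, hred, hexpand, hA, hB, hC, hRHS, hcv]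
        have hdr := hdrift k hint.1 hint.2
        calc G (k - 1) * (μ (E v) * ENNReal.ofReal (r * moranP n r k))
              + G k * (μ (E v) * ENNReal.ofReal (1 - (1 + r) * moranP n r k))
              + G (k + 1) * (μ (E v) * ENNReal.ofReal (moranP n r k)) + μ (E v)
            = μ (E v) * (ENNReal.ofReal (moranP n r k) * G (k + 1)
              + ENNReal.ofReal (r * moranP n r k) * G (k - 1)
              + ENNReal.ofReal (1 - (1 + r) * moranP n r k) * G k + 1) := by ring
          _ ≤ μ (E v) * G k := by
              exact mul_le_mul_right hdr _
          _ = G k * μ (E v) := by ring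
      · -- boundary case
        have hb : k = 0 ∨ k = n := by omega
        have hC1 := spec.2 hb
        have hother : ∀ j, j ≠ k → (μ[|E v]) {ω | Y (t + 1) ω = j} = 0 := by
          intro j h1
          have hsub : {ω | Y (t + 1) ω = j} ⊆ ({ω | Y (t + 1) ω = k})ᶜ := by
            intro ω hω
            simp only [Set.mem_compl_iff, Set.mem_setOf_eq] at hω ⊢
            omega
          have hcompl : (μ[|E v]) (({ω | Y (t + 1) ω = k})ᶜ) = 0 := by
            rw [measure_compl (hSm k) (measure_ne_top _ _), hC1, measure_univ]
            simp
          exact le_antisymm (hcompl ▸ measure_mono hsub) zero_le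
        have hone : ({k} : Finset ℕ) ⊆ Finset.range (n + 1) := by
          intro j hj
          simp only [Finset.mem_singleton] at hj
          rw [Finset.mem_range]; omega
        have hred : ∑ j ∈ Finset.range (n + 1), G j * (μ (E v) * (μ[|E v]) {ω | Y (t + 1) ω = j})
            = G k * (μ (E v) * (μ[|E v]) {ω | Y (t + 1) ω = k}) := by
          rw [show G k * (μ (E v) * (μ[|E v]) {ω | Y (t + 1) ω = k})
              = ∑ j ∈ ({k} : Finset ℕ), G j * (μ (E v) * (μ[|E v]) {ω | Y (t + 1) ω = j}) by
            rw [Finset.sum_singleton]]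
          symm
          apply Finset.sum_subset hone
          intro j _ hj
          simp only [Finset.mem_singleton] at hj
          rw [hother j hj]
          simp
        have hcv : c v = 0 := by
          simp only [hc]
          rw [if_neg]
          exact hint
        rw [hexp, hred, hC1, hRHS, hcv, mul_one, add_zero, mul_comm]
  -- sum everything
  have hcsum : ∑ v : ι, c v = μ {ω | 0 < Y t ω ∧ Y t ω < n} := by
    have hset : {ω | 0 < Y t ω ∧ Y t ω < n}
        = ⋃ v ∈ Finset.univ.filter (fun v : ι => 0 < (v lt : ℕ) ∧ (v lt : ℕ) < n), E v := by
      ext ω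
      simp only [Set.mem_setOf_eq, Set.mem_iUnion, Finset.mem_filter, Finset.mem_univ, true_and]
      constructor
      · intro hω
        refine ⟨fun i => ⟨Y i ω, Nat.lt_succ_of_le (hYle i ω)⟩, ?_, fun i => rfl⟩
        simpa [hlt] using hω
      · rintro ⟨v, hv, hω⟩
        have : Y (lt : ℕ) ω = (v lt : ℕ) := hω lt
        simp only [hlt, Fin.val_last] at this
        rw [this]
        exact hv
    calc ∑ v : ι, c v
        = ∑ v ∈ Finset.univ.filter (fun v : ι => 0 < (v lt : ℕ) ∧ (v lt : ℕ) < n), μ (E v) := by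
          rw [hc]
          exact (Finset.sum_filter _ _).symm
      _ = μ (⋃ v ∈ Finset.univ.filter (fun v : ι => 0 < (v lt : ℕ) ∧ (v lt : ℕ) < n), E v) :=
          (measure_biUnion_finset (fun a _ b _ hab => hEd hab) (fun v _ => hEm v)).symm
      _ = μ {ω | 0 < Y t ω ∧ Y t ω < n} := by rw [← hset]
  rw [hsum (fun ω => G (Y (t + 1) ω)), hsum (fun ω => G (Y t ω)), ← hcsum,
    ← Finset.sum_add_distrib]
  exact Finset.sum_le_sum fun v _ => claim v

lemma mg_nonneg {n k : ℕ} {r : ℝ} (hr : 1 < r) : 0 ≤ mg n r k := by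
  unfold mg
  exact Finset.sum_nonneg fun m _ => md_nonneg hr

set_option maxHeartbeats 1000000 in
/-- **Absorption time of the Moran process for `r > 1`.** -/
theorem moran_absorption_time_r_gt_one :
    ∃ C : ℝ, 0 < C ∧
      ∀ n : ℕ, 2 ≤ n → ∀ r : ℝ, 1 < r →
      ∀ (Ω : Type) (_ : MeasurableSpace Ω) (μ : Measure Ω), IsProbabilityMeasure μ →
      ∀ Y : ℕ → Ω → ℕ, IsMoranChain μ n r Y → (∀ ω, Y 0 ω = n - 1) →
      ∫⁻ ω, hitTime (fun t ω => Y t ω = 0 ∨ Y t ω = n) ω ∂μ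
        ≤ ENNReal.ofReal (C * (r / (r - 1)) * n * Real.log n) := by
  refine ⟨10, by norm_num, ?_⟩
  intro n hn r hr Ω mΩ μ hμ Y hY hY0
  have hYm := hY.1
  have hYle := hY.2.1
  set G : ℕ → ENNReal := fun k => ENNReal.ofReal (mg n r k) with hG
  have hdrift : ∀ k, 0 < k → k < n →
      ENNReal.ofReal (moranP n r k) * G (k + 1)
        + ENNReal.ofReal (r * moranP n r k) * G (k - 1)
        + ENNReal.ofReal (1 - (1 + r) * moranP n r k) * G k + 1 ≤ G k := by
    intro k hk0 hkn
    have hp0 : 0 ≤ moranP n r k := moranP_nonneg hr hkn.le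
    have hrp : (0:ℝ) ≤ r := by linarith
    have h1 : (0:ℝ) ≤ 1 - (1 + r) * moranP n r k := by
      have := moranP_le hr hkn.le (by omega)
      linarith
    have hg1 : 0 ≤ mg n r (k + 1) := mg_nonneg hr
    have hg2 : 0 ≤ mg n r (k - 1) := mg_nonneg hr
    have hg3 : 0 ≤ mg n r k := mg_nonneg hr
    simp only [hG]
    rw [← ENNReal.ofReal_mul hp0, ← ENNReal.ofReal_mul (by positivity),
      ← ENNReal.ofReal_mul h1, ← ENNReal.ofReal_one,
      ← ENNReal.ofReal_add (by positivity) (mul_nonneg (by positivity) hg2),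
      ← ENNReal.ofReal_add (by positivity) (mul_nonneg h1 hg3),
      ← ENNReal.ofReal_add (by positivity) (by norm_num)]
    exact ENNReal.ofReal_le_ofReal (drift hr hk0 hkn)
  set J : ℕ → Set Ω := fun t => {ω | ∀ i ≤ t, ¬(Y i ω = 0 ∨ Y i ω = n)} with hJ
  have hJm : ∀ t, MeasurableSet (J t) := by
    intro t
    have : J t = ⋂ i ∈ Set.Iic t, ((Y i) ⁻¹' ({0, n} : Set ℕ))ᶜ := by
      ext ω
      simp [hJ, Set.mem_iInter]
    rw [this]
    exact MeasurableSet.biInter (Set.to_countable _)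
      (fun i _ => ((hYm i) ((measurableSet_singleton 0).union (measurableSet_singleton n))).compl)
  set I : ℕ → Set Ω := fun t => {ω | 0 < Y t ω ∧ Y t ω < n} with hI
  have hJI : ∀ t, J t ⊆ I t := by
    intro t ω hω
    have h1 := hω t le_rfl
    have h2 := hYle t ω
    simp only [hI, Set.mem_setOf_eq]
    omega
  have htel : ∀ T₀ : ℕ, (∑ t ∈ Finset.range T₀, μ (I t)) + ∫⁻ ω, G (Y T₀ ω) ∂μ
      ≤ ∫⁻ ω, G (Y 0 ω) ∂μ := by
    intro T₀
    induction T₀ with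
    | zero => simp
    | succ T ih =>
      rw [Finset.sum_range_succ]
      calc (∑ t ∈ Finset.range T, μ (I t)) + μ (I T) + ∫⁻ ω, G (Y (T + 1) ω) ∂μ
          = (∑ t ∈ Finset.range T, μ (I t)) + ((∫⁻ ω, G (Y (T + 1) ω) ∂μ) + μ (I T)) := by ring
        _ ≤ (∑ t ∈ Finset.range T, μ (I t)) + ∫⁻ ω, G (Y T ω) ∂μ :=
            add_le_add_right (step_bound μ hY hr hn G hdrift T) _
        _ ≤ _ := ih
  have hG0 : ∫⁻ ω, G (Y 0 ω) ∂μ = ENNReal.ofReal (mg n r (n - 1)) := by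
    have hc : ∀ ω, G (Y 0 ω) = ENNReal.ofReal (mg n r (n - 1)) := fun ω => by rw [hY0 ω]
    rw [lintegral_congr hc, lintegral_const, measure_univ, mul_one]
  have hsum : ∑' t : ℕ, μ (J t) ≤ ENNReal.ofReal (mg n r (n - 1)) := by
    rw [ENNReal.tsum_eq_iSup_nat]
    apply iSup_le
    intro T₀
    calc ∑ t ∈ Finset.range T₀, μ (J t)
        ≤ ∑ t ∈ Finset.range T₀, μ (I t) :=
          Finset.sum_le_sum fun t _ => measure_mono (hJI t)
      _ ≤ (∑ t ∈ Finset.range T₀, μ (I t)) + ∫⁻ ω, G (Y T₀ ω) ∂μ := le_self_add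
      _ ≤ ∫⁻ ω, G (Y 0 ω) ∂μ := htel T₀
      _ = _ := hG0
  calc ∫⁻ ω, hitTime (fun t ω => Y t ω = 0 ∨ Y t ω = n) ω ∂μ
      ≤ ∫⁻ ω, ∑' t : ℕ, Set.indicator (J t) (fun _ => (1 : ENNReal)) ω ∂μ :=
        lintegral_mono fun ω => hitTime_le_tsum _ ω
    _ = ∑' t : ℕ, ∫⁻ ω, Set.indicator (J t) (fun _ => (1 : ENNReal)) ω ∂μ :=
        lintegral_tsum fun t => (measurable_const.indicator (hJm t)).aemeasurable
    _ = ∑' t : ℕ, μ (J t) := tsum_congr fun t => lintegral_indicator_one (hJm t)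
    _ ≤ ENNReal.ofReal (mg n r (n - 1)) := hsum
    _ ≤ ENNReal.ofReal (10 * (r / (r - 1)) * n * Real.log n) :=
        ENNReal.ofReal_le_ofReal (mg_final hr hn)
end

section
/- Expected number of iterations of the randomized 2-SAT algorithm: Let φ be a satisfiable 2-SAT formula over n Boolean variables. Consider the random process of truth assignments (a_t)_{t∈ℕ} where a_0 is arbitrary and, at each step t, if a_t does not satisfy φ then a clause of φ unsatisfied by a_t is selected (the selection may depend arbitrarily on the entire history), one of the two variables occurring in that clause is chosen uniformly at random, and a_{t+1} is obtained from a_t by flipping the truth value of that variable; if a_t satisfies φ then a_{t+1} = a_t. Let T = inf{t ∈ ℕ : a_t satisfies φ}. Then E[T] ≤ n². -/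
set_option autoImplicit false

open MeasureTheory ProbabilityTheory

/-- A literal over `n` Boolean variables: a variable together with a polarity. -/
abbrev Literal (n : ℕ) := Fin n × Bool

/-- A 2-SAT clause: the disjunction of two literals. -/
abbrev Clause2 (n : ℕ) := Literal n × Literal n

/-- The assignment `a` satisfies the literal `l`. -/
def LitSat {n : ℕ} (a : Fin n → Bool) (l : Literal n) : Prop := a l.1 = l.2

/-- The assignment `a` satisfies the 2-clause `cl` (one of the literals is true). -/
def ClauseSat {n : ℕ} (a : Fin n → Bool) (cl : Clause2 n) : Prop :=
  LitSat a cl.1 ∨ LitSat a cl.2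

/-- The assignment `a` satisfies the 2-SAT formula `φ` (a conjunction of 2-clauses). -/
def FormulaSat {n : ℕ} (φ : Finset (Clause2 n)) (a : Fin n → Bool) : Prop :=
  ∀ cl ∈ φ, ClauseSat a cl

open scoped ENNReal Classical

set_option maxHeartbeats 1000000

namespace TwoSat

/-- Hamming distance between two assignments. -/
def hamm {n : ℕ} (a b : Fin n → Bool) : ℕ := ∑ i, if a i = b i then 0 else 1

lemma hamm_le {n : ℕ} (a b : Fin n → Bool) : hamm a b ≤ n := by
  classical
  calc hamm a b ≤ ∑ _i : Fin n, 1 := Finset.sum_le_sum (fun i _ => by split <;> omega)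
  _ = n := by simp

lemma hamm_eq_zero {n : ℕ} {a b : Fin n → Bool} (h : hamm a b = 0) : a = b := by
  classical
  funext i
  rw [hamm, Finset.sum_eq_zero_iff] at h
  have := h i (Finset.mem_univ i)
  by_contra hne
  rw [if_neg hne] at this
  omega

lemma hamm_split {n : ℕ} (a b : Fin n → Bool) (v : Fin n) :
    hamm a b = (if a v = b v then 0 else 1) + ∑ i ∈ Finset.univ.erase v,
      (if a i = b i then 0 else 1) := by
  classical
  rw [hamm, ← Finset.add_sum_erase _ _ (Finset.mem_univ v)]

lemma hamm_flip_eq {n : ℕ} (a b : Fin n → Bool) (v : Fin n) (h : a v = b v) :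
    hamm (Function.update a v (!a v)) b = hamm a b + 1 := by
  classical
  rw [hamm_split a b v, hamm_split (Function.update a v (!a v)) b v]
  have h1 : Function.update a v (!a v) v = !a v := Function.update_self _ _ _
  have h2 : ∀ i ∈ Finset.univ.erase v,
      (if Function.update a v (!a v) i = b i then 0 else 1) =
      (if a i = b i then (0:ℕ) else 1) := by
    intro i hi
    rw [Function.update_of_ne (Finset.ne_of_mem_erase hi)]
  rw [Finset.sum_congr rfl h2, h1]
  have : ¬ (!a v) = b v := by rw [← h]; cases a v <;> simp
  simp [h, this]
  omega

lemma hamm_flip_ne {n : ℕ} (a b : Fin n → Bool) (v : Fin n) (h : ¬ a v = b v) :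
    hamm (Function.update a v (!a v)) b + 1 = hamm a b := by
  classical
  rw [hamm_split a b v, hamm_split (Function.update a v (!a v)) b v]
  have h1 : Function.update a v (!a v) v = !a v := Function.update_self _ _ _
  have h2 : ∀ i ∈ Finset.univ.erase v,
      (if Function.update a v (!a v) i = b i then 0 else 1) =
      (if a i = b i then (0:ℕ) else 1) := by
    intro i hi
    rw [Function.update_of_ne (Finset.ne_of_mem_erase hi)]
  rw [Finset.sum_congr rfl h2, h1]
  have : (!a v) = b v := by cases hav : a v <;> cases hbv : b v <;> simp_all
  simp [h, this]
  omega

/-- The quadratic potential. -/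
def gN (n k : ℕ) : ℕ := k * (2 * n - k)

lemma gN_le (n k : ℕ) (hk : k ≤ n) : gN n k ≤ n * n := by
  obtain ⟨d, hd⟩ : ∃ d, n = k + d := ⟨n - k, by omega⟩
  have h2 : 2 * n - k = k + 2 * d := by omega
  rw [gN, h2]
  nlinarith

lemma gN_key (n x d1 d2 : ℕ) (hx : x ≤ n) (hx1 : 1 ≤ x)
    (h1 : d1 + 1 = x ∨ d1 = x + 1) (h2 : d2 + 1 = x ∨ d2 = x + 1)
    (h3 : d1 + 1 = x ∨ d2 + 1 = x) :
    gN n d1 + gN n d2 + 2 ≤ 2 * gN n x := by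
  obtain ⟨A, hA⟩ : ∃ A, d1 + A = 2 * n := ⟨2 * n - d1, by omega⟩
  obtain ⟨B, hB⟩ : ∃ B, d2 + B = 2 * n := ⟨2 * n - d2, by omega⟩
  obtain ⟨C, hC⟩ : ∃ C, x + C = 2 * n := ⟨2 * n - x, by omega⟩
  have e1 : gN n d1 = d1 * A := by rw [gN]; congr 1; omega
  have e2 : gN n d2 = d2 * B := by rw [gN]; congr 1; omega
  have e3 : gN n x = x * C := by rw [gN]; congr 1; omega
  rw [e1, e2, e3]
  rcases h1 with h1 | h1 <;> rcases h2 with h2 | h2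
  · nlinarith
  · nlinarith
  · nlinarith
  · omega

lemma hitTime_eq_tsum {Ω : Type*} (P : ℕ → Ω → Prop)
    (hmono : ∀ t ω, P t ω → P (t + 1) ω) (ω : Ω) :
    hitTime P ω = ∑' t : ℕ, if P t ω then (0:ℝ≥0∞) else 1 := by
  classical
  have hmono' : ∀ s t : ℕ, s ≤ t → P s ω → P t ω := by
    intro s t hst hs
    induction t, hst using Nat.le_induction with
    | base => exact hs
    | succ t ht ih => exact hmono t ω ih
  by_cases h : ∃ t, P t ω
  · set T := Nat.find h with hTdef
    have hT : P T ω := Nat.find_spec h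
    have h1 : hitTime P ω = (T : ENNReal) := by
      apply le_antisymm
      · exact sInf_le ⟨T, rfl, hT⟩
      · apply le_sInf
        rintro _ ⟨m, rfl, hm⟩
        exact_mod_cast Nat.cast_le.mpr (Nat.find_min' h hm)
    rw [h1]
    rw [tsum_eq_sum (s := Finset.range T) (by
      intro t ht
      rw [Finset.mem_range, not_lt] at ht
      exact if_pos (hmono' T t ht hT))]
    have : ∀ t ∈ Finset.range T, (if P t ω then (0:ℝ≥0∞) else 1) = 1 := by
      intro t ht
      rw [Finset.mem_range] at ht
      exact if_neg (Nat.find_min h ht)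
    rw [Finset.sum_congr rfl this]
    simp
  · push_neg at h
    have h1 : {t : ENNReal | ∃ n : ℕ, t = n ∧ P n ω} = ∅ := by
      ext t; simp only [Set.mem_setOf_eq, Set.mem_empty_iff_false, iff_false]
      rintro ⟨m, rfl, hm⟩; exact h m hm
    rw [hitTime, h1, sInf_empty]
    have h2 : ∀ t : ℕ, (if P t ω then (0:ℝ≥0∞) else 1) = 1 := fun t => if_neg (h t)
    rw [tsum_congr h2, ENNReal.tsum_const_eq_top_of_ne_zero one_ne_zero]

lemma hitTime_eq_tsum' {Ω : Type*} (P : ℕ → Ω → Prop)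
    (hmono : ∀ t ω, P t ω → P (t + 1) ω) (ω : Ω) :
    hitTime P ω = ∑' t : ℕ, Set.indicator {ω' | ¬ P t ω'} (fun _ => (1:ℝ≥0∞)) ω := by
  rw [hitTime_eq_tsum P hmono ω]
  apply tsum_congr
  intro t
  by_cases h : P t ω <;> simp [h]

lemma half_split {Ω : Type*} [MeasurableSpace Ω] (μ : Measure Ω) [IsFiniteMeasure μ]
    {A B : Set Ω} (hA : MeasurableSet A) (hB : MeasurableSet B) (h0 : μ A ≠ 0)
    (hc : ProbabilityTheory.cond μ A B = 1 / 2) :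
    μ (A ∩ B) = μ A / 2 ∧ μ (A ∩ Bᶜ) = μ A / 2 := by
  have hfin : μ A ≠ ⊤ := measure_ne_top μ A
  rw [ProbabilityTheory.cond_apply hA] at hc
  have h1 : μ (A ∩ B) = μ A / 2 := by
    have h2 := congrArg (fun x => μ A * x) hc
    simp only [← mul_assoc, ENNReal.mul_inv_cancel h0 hfin, one_mul] at h2
    rw [h2, mul_one_div]
  refine ⟨h1, ?_⟩
  have h2 : μ (A ∩ B) + μ (A ∩ Bᶜ) = μ A := by
    rw [← Set.diff_eq]
    exact measure_inter_add_diff A hB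
  rw [h1] at h2
  have h3 : μ A / 2 + μ (A ∩ Bᶜ) = μ A / 2 + μ A / 2 := by
    rw [h2, ENNReal.add_halves]
  exact (ENNReal.add_right_inj (by simp [ENNReal.div_eq_inv_mul]; finiteness)).mp h3

lemma lintegral_partition {Ω : Type*} [MeasurableSpace Ω] (μ : Measure Ω) {S : Type*}
    [Fintype S] (A : S → Set Ω) (hmeas : ∀ s, MeasurableSet (A s))
    (hpart : ∀ ω, ∃! s, ω ∈ A s) (f : Ω → ℝ≥0∞) :
    ∫⁻ ω, f ω ∂μ = ∑ s : S, ∫⁻ ω in A s, f ω ∂μ := by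
  have hdisj : Pairwise (Function.onFun Disjoint A) := by
    intro s s' hss'
    rw [Function.onFun, Set.disjoint_left]
    intro ω hs hs'
    obtain ⟨u, _, hu⟩ := hpart ω
    exact hss' ((hu s hs).trans (hu s' hs').symm)
  have huniv : (⋃ s, A s) = Set.univ := by
    ext ω
    simp only [Set.mem_iUnion, Set.mem_univ, iff_true]
    obtain ⟨u, hu, _⟩ := hpart ω
    exact ⟨u, hu⟩
  rw [← setLIntegral_univ, ← huniv, lintegral_iUnion hmeas hdisj, tsum_fintype]

lemma measure_partition {Ω : Type*} [MeasurableSpace Ω] (μ : Measure Ω) {S : Type*}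
    [Fintype S] (A : S → Set Ω) (hmeas : ∀ s, MeasurableSet (A s))
    (hpart : ∀ ω, ∃! s, ω ∈ A s) {B : Set Ω} (hB : MeasurableSet B) :
    μ B = ∑ s : S, μ (A s ∩ B) := by
  have hdisj : Pairwise (Function.onFun Disjoint (fun s => A s ∩ B)) := by
    intro s s' hss'
    rw [Function.onFun, Set.disjoint_left]
    intro ω hs hs'
    obtain ⟨u, _, hu⟩ := hpart ω
    exact hss' ((hu s hs.1).trans (hu s' hs'.1).symm)
  have huniv : (⋃ s, A s ∩ B) = B := by
    ext ω
    simp only [Set.mem_iUnion, Set.mem_inter_iff]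
    constructor
    · rintro ⟨u, _, hb⟩; exact hb
    · intro hb
      obtain ⟨u, hu, _⟩ := hpart ω
      exact ⟨u, hu, hb⟩
  conv_lhs => rw [← huniv]
  rw [measure_iUnion hdisj (fun s => (hmeas s).inter hB), tsum_fintype]

end TwoSat

/-- **Expected number of iterations of the randomized 2-SAT algorithm.**
`φ` is a satisfiable 2-SAT formula over `n` variables. `a t` is the assignment after `t`
steps; as long as `a t` does not satisfy `φ`, an unsatisfied clause `sel t` is selected
(arbitrarily, depending on the history) and the value of a uniformly random one of its
two variables (chosen by the fair coin `pick t`) is flipped. `T` is the first time the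
assignment satisfies `φ`; then `E[T] ≤ n²`. -/
theorem randomized_two_sat_expected_iterations
    (n : ℕ) (φ : Finset (Clause2 n)) (hsat : ∃ a : Fin n → Bool, FormulaSat φ a)
    {Ω : Type} [MeasurableSpace Ω] (μ : Measure Ω) [IsProbabilityMeasure μ]
    (a : ℕ → Ω → Fin n → Bool) (sel : ℕ → Ω → Clause2 n) (pick : ℕ → Ω → Bool)
    (hma : ∀ t, Measurable (a t)) (hmsel : ∀ t, Measurable (sel t))
    (hmpick : ∀ t, Measurable (pick t))
    (hstop : ∀ t ω, FormulaSat φ (a t ω) → a (t + 1) ω = a t ω)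
    (hsel : ∀ t ω, ¬ FormulaSat φ (a t ω) →
      sel t ω ∈ φ ∧ ¬ ClauseSat (a t ω) (sel t ω))
    (hstep : ∀ t ω, ¬ FormulaSat φ (a t ω) →
      a (t + 1) ω = Function.update (a t ω)
        (if pick t ω then (sel t ω).1.1 else (sel t ω).2.1)
        (! a t ω (if pick t ω then (sel t ω).1.1 else (sel t ω).2.1)))
    (hfair : ∀ t : ℕ, ∀ a₀ : Fin n → Bool, ∀ f : ℕ → Clause2 n, ∀ g : ℕ → Bool,
      μ {ω | a 0 ω = a₀ ∧ (∀ i ≤ t, sel i ω = f i) ∧ ∀ i < t, pick i ω = g i} ≠ 0 →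
      (ProbabilityTheory.cond μ
          {ω | a 0 ω = a₀ ∧ (∀ i ≤ t, sel i ω = f i) ∧ ∀ i < t, pick i ω = g i})
        {ω | pick t ω = true} = 1 / 2) :
    ∫⁻ ω, hitTime (fun t ω => FormulaSat φ (a t ω)) ω ∂μ ≤ ((n : ENNReal)) ^ 2 := by
  classical
  obtain ⟨astar, hastar⟩ := hsat
  have hmb : ∀ (s : Set (Fin n → Bool)), MeasurableSet s := fun s => s.to_countable.measurableSet
  have hmc : ∀ (s : Set (Clause2 n)), MeasurableSet s := fun s => s.to_countable.measurableSet
  have hmbool : ∀ (s : Set Bool), MeasurableSet s := fun s => s.to_countable.measurableSet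
  have hmono : ∀ t ω, FormulaSat φ (a t ω) → FormulaSat φ (a (t+1) ω) := by
    intro t ω h
    rw [hstop t ω h]
    exact h
  have hUnsatMeas : ∀ t, MeasurableSet {ω | ¬ FormulaSat φ (a t ω)} :=
    fun t => (hma t) (hmb {b | ¬ FormulaSat φ b})
  -- rewrite the integral as a sum of measures
  have hrw : ∫⁻ ω, hitTime (fun t ω => FormulaSat φ (a t ω)) ω ∂μ
      = ∑' t : ℕ, μ {ω | ¬ FormulaSat φ (a t ω)} := by
    rw [lintegral_congr (fun ω =>
      TwoSat.hitTime_eq_tsum' (fun t ω => FormulaSat φ (a t ω)) hmono ω)]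
    rw [lintegral_tsum (fun t => (measurable_const.indicator (hUnsatMeas t)).aemeasurable)]
    apply tsum_congr
    intro t
    rw [lintegral_indicator (hUnsatMeas t), setLIntegral_one]
  rw [hrw]
  -- the potential
  set G : (Fin n → Bool) → ℝ≥0∞ := fun b => ((TwoSat.gN n (TwoSat.hamm b astar) : ℕ) : ℝ≥0∞)
    with hG
  have hI0 : ∫⁻ ω, G (a 0 ω) ∂μ ≤ (n : ℝ≥0∞) ^ 2 := by
    calc ∫⁻ ω, G (a 0 ω) ∂μ ≤ ∫⁻ _, ((n * n : ℕ) : ℝ≥0∞) ∂μ := by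
          apply lintegral_mono
          intro ω
          rw [hG]
          exact Nat.cast_le.mpr (TwoSat.gN_le n _ (TwoSat.hamm_le _ _))
    _ = ((n * n : ℕ) : ℝ≥0∞) := by simp
    _ = (n : ℝ≥0∞) ^ 2 := by push_cast; ring
  -- the key one-step inequality
  have key : ∀ t, μ {ω | ¬ FormulaSat φ (a t ω)} + ∫⁻ ω, G (a (t+1) ω) ∂μ
      ≤ ∫⁻ ω, G (a t ω) ∂μ := by
    intro t
    obtain ⟨A, hAdef⟩ : ∃ A : ((Fin n → Bool) × (Fin (t+1) → Clause2 n) × (Fin t → Bool))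
        → Set Ω, A = fun s => {ω | a 0 ω = s.1 ∧ (∀ i : Fin (t+1), sel i ω = s.2.1 i)
          ∧ ∀ i : Fin t, pick i ω = s.2.2 i} := ⟨_, rfl⟩
    have hmem : ∀ s ω, ω ∈ A s ↔ (a 0 ω = s.1 ∧ (∀ i : Fin (t+1), sel i ω = s.2.1 i)
        ∧ ∀ i : Fin t, pick i ω = s.2.2 i) := by
      intro s ω
      rw [hAdef]
      exact Iff.rfl
    have hAmeas : ∀ s, MeasurableSet (A s) := by
      intro s
      have heq : A s = (a 0 ⁻¹' {s.1}) ∩ ((⋂ i : Fin (t+1), sel i ⁻¹' {s.2.1 i})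
          ∩ (⋂ i : Fin t, pick i ⁻¹' {s.2.2 i})) := by
        ext ω
        rw [hmem]
        simp only [Set.mem_inter_iff, Set.mem_iInter, Set.mem_preimage,
          Set.mem_singleton_iff]
      rw [heq]
      refine ((hma 0) (hmb _)).inter (MeasurableSet.inter ?_ ?_)
      · exact MeasurableSet.iInter (fun i : Fin (t+1) => (hmsel i) (hmc {s.2.1 i}))
      · exact MeasurableSet.iInter (fun i : Fin t => (hmpick i) (hmbool {s.2.2 i}))
    have hpart : ∀ ω, ∃! s, ω ∈ A s := by
      intro ω
      refine ⟨⟨a 0 ω, fun i => sel i ω, fun i => pick i ω⟩,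
        (hmem _ ω).mpr ⟨rfl, fun i => rfl, fun i => rfl⟩, ?_⟩
      rintro ⟨b, F, P⟩ hs
      obtain ⟨h1, h2, h3⟩ := (hmem _ ω).mp hs
      simp only [Prod.mk.injEq]
      exact ⟨h1.symm, (funext fun i => (h2 i).symm), (funext fun i => (h3 i).symm)⟩
    have hdet : ∀ s, ∀ ω, ω ∈ A s → ∀ ω', ω' ∈ A s → ∀ u, u ≤ t → a u ω = a u ω' := by
      intro s ω hω ω' hω' u
      obtain ⟨hω1, hω2, hω3⟩ := (hmem s ω).mp hω
      obtain ⟨hω1', hω2', hω3'⟩ := (hmem s ω').mp hω'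
      induction u with
      | zero => intro _; rw [hω1, hω1']
      | succ u ih =>
        intro hu
        have hau : a u ω = a u ω' := ih (by omega)
        by_cases hs : FormulaSat φ (a u ω)
        · rw [hstop u ω hs, hstop u ω' (by rw [← hau]; exact hs), hau]
        · have hs' : ¬ FormulaSat φ (a u ω') := by rw [← hau]; exact hs
          have e1 : sel u ω = s.2.1 ⟨u, by omega⟩ := hω2 ⟨u, by omega⟩
          have e2 : sel u ω' = s.2.1 ⟨u, by omega⟩ := hω2' ⟨u, by omega⟩
          have e3 : pick u ω = s.2.2 ⟨u, by omega⟩ := hω3 ⟨u, by omega⟩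
          have e4 : pick u ω' = s.2.2 ⟨u, by omega⟩ := hω3' ⟨u, by omega⟩
          rw [hstep u ω hs, hstep u ω' hs', hau, e1, e2, e3, e4]
    -- decompose everything over the atoms
    rw [TwoSat.lintegral_partition μ A hAmeas hpart (fun ω => G (a (t+1) ω)),
        TwoSat.lintegral_partition μ A hAmeas hpart (fun ω => G (a t ω)),
        TwoSat.measure_partition μ A hAmeas hpart (hUnsatMeas t),
        ← Finset.sum_add_distrib]
    apply Finset.sum_le_sum
    intro s _
    by_cases hz : μ (A s) = 0
    · have hres : μ.restrict (A s) = 0 := Measure.restrict_eq_zero.mpr hz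
      have h1 : μ (A s ∩ {ω | ¬ FormulaSat φ (a t ω)}) = 0 :=
        measure_mono_null Set.inter_subset_left hz
      rw [h1, hres]
      simp
    · obtain ⟨ω₀, hω₀⟩ : (A s).Nonempty :=
        Set.nonempty_iff_ne_empty.mpr (fun he => hz (by rw [he]; exact measure_empty))
      have hconst : ∀ ω, ω ∈ A s → a t ω = a t ω₀ :=
        fun ω hω => hdet s ω hω ω₀ hω₀ t le_rfl
      by_cases hsata : FormulaSat φ (a t ω₀)
      · -- satisfied on this atom: nothing changes
        have h1 : A s ∩ {ω | ¬ FormulaSat φ (a t ω)} = ∅ := by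
          rw [Set.eq_empty_iff_forall_notMem]
          rintro ω ⟨hω, hns⟩
          exact hns (show FormulaSat φ (a t ω) by rw [hconst ω hω]; exact hsata)
        rw [h1, measure_empty, zero_add]
        apply le_of_eq
        apply setLIntegral_congr_fun (hAmeas s)
        intro ω hω
        beta_reduce
        rw [hstop t ω (by rw [hconst ω hω]; exact hsata)]
      · -- unsatisfied on this atom
        have hsub : A s ∩ {ω | ¬ FormulaSat φ (a t ω)} = A s :=
          Set.inter_eq_left.mpr (fun ω hω =>
            show ¬ FormulaSat φ (a t ω) by rw [hconst ω hω]; exact hsata)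
        rw [hsub]
        have hcconst : ∀ ω, ω ∈ A s → sel t ω = sel t ω₀ := by
          intro ω hω
          have e1 : sel t ω = s.2.1 ⟨t, by omega⟩ := ((hmem s ω).mp hω).2.1 ⟨t, by omega⟩
          have e2 : sel t ω₀ = s.2.1 ⟨t, by omega⟩ := ((hmem s ω₀).mp hω₀).2.1 ⟨t, by omega⟩
          rw [e1, e2]
        set α := a t ω₀ with hαdef
        set c := sel t ω₀ with hcdef
        obtain ⟨β, hβ⟩ : ∃ β : Bool → (Fin n → Bool), β = fun b =>
            Function.update α (if b then c.1.1 else c.2.1)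
              (!α (if b then c.1.1 else c.2.1)) := ⟨_, rfl⟩
        have hnext : ∀ ω, ω ∈ A s → a (t+1) ω = β (pick t ω) := by
          intro ω hω
          have h1 : ¬ FormulaSat φ (a t ω) := by rw [hconst ω hω]; exact hsata
          rw [hβ, hstep t ω h1, hconst ω hω, hcconst ω hω]
        have hTmeas : MeasurableSet {ω | pick t ω = true} := (hmpick t) (hmbool {b | b = true})
        -- the fair coin splits the atom in half
        obtain ⟨hT, hF⟩ : μ (A s ∩ {ω | pick t ω = true}) = μ (A s) / 2 ∧
            μ (A s ∩ {ω | pick t ω = true}ᶜ) = μ (A s) / 2 := by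
          apply TwoSat.half_split μ (hAmeas s) hTmeas hz
          have hseteq : {ω | a 0 ω = s.1 ∧
              (∀ i ≤ t, sel i ω = (fun j => if h : j < t+1 then s.2.1 ⟨j, h⟩ else c) i) ∧
              ∀ i < t, pick i ω = (fun j => if h : j < t then s.2.2 ⟨j, h⟩ else true) i}
              = A s := by
            ext ω
            rw [hmem]
            simp only [Set.mem_setOf_eq]
            constructor
            · rintro ⟨h1, h2, h3⟩
              refine ⟨h1, fun i => ?_, fun i => ?_⟩
              · have := h2 i.val (by omega)
                rwa [dif_pos i.isLt, Fin.eta] at this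
              · have := h3 i.val i.isLt
                rwa [dif_pos i.isLt, Fin.eta] at this
            · rintro ⟨h1, h2, h3⟩
              refine ⟨h1, fun i hi => ?_, fun i hi => ?_⟩
              · rw [dif_pos (show i < t+1 by omega)]
                exact h2 ⟨i, by omega⟩
              · rw [dif_pos hi]
                exact h3 ⟨i, hi⟩
          have := hfair t s.1 (fun j => if h : j < t+1 then s.2.1 ⟨j, h⟩ else c)
            (fun j => if h : j < t then s.2.2 ⟨j, h⟩ else true)
            (by rw [hseteq]; exact hz)
          rwa [hseteq] at this
        -- compute the two integrals
        have hrhs : ∫⁻ ω in A s, G (a t ω) ∂μ = G α * μ (A s) := by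
          rw [setLIntegral_congr_fun (hAmeas s)
            (fun ω hω => by rw [hconst ω hω])]
          exact setLIntegral_const _ _
        obtain ⟨m, hm2, hmT, hmF⟩ : ∃ m, μ (A s) = m + m ∧
            μ (A s ∩ {ω | pick t ω = true}) = m ∧
            μ (A s ∩ {ω | pick t ω = true}ᶜ) = m :=
          ⟨μ (A s) / 2, (ENNReal.add_halves _).symm, hT, hF⟩
        have hdisj2 : Disjoint (A s ∩ {ω | pick t ω = true})
            (A s ∩ {ω | pick t ω = true}ᶜ) :=
          (disjoint_compl_right.mono Set.inter_subset_right Set.inter_subset_right)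
        have e1 : ∫⁻ ω in A s ∩ {ω | pick t ω = true}, G (β (pick t ω)) ∂μ
            = G (β true) * m := by
          rw [setLIntegral_congr_fun ((hAmeas s).inter hTmeas)
            (fun ω hω => by rw [hω.2])]
          rw [setLIntegral_const, hmT]
        have e2 : ∫⁻ ω in A s ∩ {ω | pick t ω = true}ᶜ, G (β (pick t ω)) ∂μ
            = G (β false) * m := by
          rw [setLIntegral_congr_fun ((hAmeas s).inter hTmeas.compl)
            (fun ω hω => by
              have hpf : pick t ω = false := by
                have := hω.2
                simp only [Set.mem_compl_iff, Set.mem_setOf_eq, Bool.not_eq_true] at this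
                exact this
              rw [hpf])]
          rw [setLIntegral_const, hmF]
        have hlhs : ∫⁻ ω in A s, G (a (t+1) ω) ∂μ
            = G (β true) * m + G (β false) * m := by
          rw [setLIntegral_congr_fun (hAmeas s)
            (fun ω hω => by rw [hnext ω hω])]
          conv_lhs => rw [show A s = (A s ∩ {ω | pick t ω = true})
            ∪ (A s ∩ {ω | pick t ω = true}ᶜ) from (Set.inter_union_compl _ _).symm]
          rw [lintegral_union ((hAmeas s).inter hTmeas.compl) hdisj2, e1, e2]
        rw [hrhs, hlhs, hm2]
        -- the combinatorial heart
        have hα_unsat : ¬ FormulaSat φ α := hsata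
        have hx1 : 1 ≤ TwoSat.hamm α astar := by
          by_contra h
          have h0 : TwoSat.hamm α astar = 0 := by omega
          exact hα_unsat (by rw [TwoSat.hamm_eq_zero h0]; exact hastar)
        have hxn : TwoSat.hamm α astar ≤ n := TwoSat.hamm_le _ _
        have hcφ : c ∈ φ ∧ ¬ ClauseSat α c := hsel t ω₀ hsata
        have hastarc : ClauseSat astar c := hastar c hcφ.1
        have hβ1 : β true = Function.update α c.1.1 (!α c.1.1) := by simp [hβ]
        have hβ2 : β false = Function.update α c.2.1 (!α c.2.1) := by simp [hβ]
        have hdec : α c.1.1 ≠ astar c.1.1 ∨ α c.2.1 ≠ astar c.2.1 := by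
          rcases hastarc with h | h
          · left
            intro he
            exact hcφ.2 (Or.inl (he.trans h))
          · right
            intro he
            exact hcφ.2 (Or.inr (he.trans h))
        have harithN : TwoSat.gN n (TwoSat.hamm (β true) astar)
            + TwoSat.gN n (TwoSat.hamm (β false) astar) + 2
            ≤ 2 * TwoSat.gN n (TwoSat.hamm α astar) := by
          apply TwoSat.gN_key n _ _ _ hxn hx1
          · by_cases h1 : α c.1.1 = astar c.1.1
            · right; rw [hβ1]; exact TwoSat.hamm_flip_eq α astar c.1.1 h1
            · left; rw [hβ1]; exact TwoSat.hamm_flip_ne α astar c.1.1 h1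
          · by_cases h2 : α c.2.1 = astar c.2.1
            · right; rw [hβ2]; exact TwoSat.hamm_flip_eq α astar c.2.1 h2
            · left; rw [hβ2]; exact TwoSat.hamm_flip_ne α astar c.2.1 h2
          · rcases hdec with h | h
            · left; rw [hβ1]; exact TwoSat.hamm_flip_ne α astar c.1.1 h
            · right; rw [hβ2]; exact TwoSat.hamm_flip_ne α astar c.2.1 h
        have harith : G (β true) + G (β false) + 2 ≤ 2 * G α := by
          simp only [hG]
          exact_mod_cast harithN
        -- put it together
        calc (m + m) + (G (β true) * m + G (β false) * m)
            = (G (β true) + G (β false) + 2) * m := by ring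
        _ ≤ (2 * G α) * m := mul_le_mul_left harith _
        _ = G α * (m + m) := by ring
  -- telescoping
  have tel : ∀ N : ℕ, (∑ t ∈ Finset.range N, μ {ω | ¬ FormulaSat φ (a t ω)})
      + ∫⁻ ω, G (a N ω) ∂μ ≤ ∫⁻ ω, G (a 0 ω) ∂μ := by
    intro N
    induction N with
    | zero => simp
    | succ N ih =>
      rw [Finset.sum_range_succ]
      calc (∑ t ∈ Finset.range N, μ {ω | ¬ FormulaSat φ (a t ω)}
            + μ {ω | ¬ FormulaSat φ (a N ω)}) + ∫⁻ ω, G (a (N+1) ω) ∂μ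
          = (∑ t ∈ Finset.range N, μ {ω | ¬ FormulaSat φ (a t ω)})
            + (μ {ω | ¬ FormulaSat φ (a N ω)} + ∫⁻ ω, G (a (N+1) ω) ∂μ) := by ring
      _ ≤ (∑ t ∈ Finset.range N, μ {ω | ¬ FormulaSat φ (a t ω)})
            + ∫⁻ ω, G (a N ω) ∂μ := add_le_add_right (key N) _
      _ ≤ _ := ih
  apply ENNReal.tsum_le_of_sum_range_le
  intro N
  exact le_trans (le_trans le_self_add (tel N)) hI0
end
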